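/- arXiv:1902.04304 — 4 statements merged into one kernel-verified Lean document; each statement's English description precedes it below -/
import Mathlib

section
/- Almost surely, E[e | x] = θ̃'(I_d − P_{M̃})(E[z̃ | x] − P_{M̃} z̃), where E[z̃ | x] denotes the componentwise conditional expectation of z̃ given the σ-algebra generated by x. -/
open MeasureTheory Matrix ProbabilityTheory

lemma aux_int_mul {Ω : Type*} [MeasureSpace Ω] {f g : Ω → ℝ}
    (hf : MemLp f 2 ℙ) (hg : MemLp g 2 ℙ) :
    Integrable (fun ω => f ω * g ω) ℙ := by
  have h : MemLp (f • g) 1 ℙ := hg.smul hf (hpqr := ⟨by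
    rw [ENNReal.inv_two_add_inv_two, inv_one]⟩)
  rw [← memLp_one_iff_integrable]
  exact h

lemma aux_dot (n m : ℕ) (A : Matrix (Fin n) (Fin m) ℝ) (v : Fin m → ℝ) (w : Fin n → ℝ) :
    (A *ᵥ v) ⬝ᵥ w = v ⬝ᵥ (Aᵀ *ᵥ w) := by
  rw [Matrix.dotProduct_mulVec, Matrix.vecMul_transpose]

lemma aux_orth {Ω : Type*} [MeasureSpace Ω] [IsProbabilityMeasure (ℙ : Measure Ω)]
    {f g : Ω → ℝ} (hf : MemLp f 2 ℙ) (hg : MemLp g 2 ℙ)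
    (hmin : ∀ t : ℝ, ∫ ω, (f ω) ^ 2 ≤ ∫ ω, (f ω - t * g ω) ^ 2) :
    ∫ ω, f ω * g ω = 0 := by
  set J := ∫ ω, f ω * g ω with hJ
  set C := ∫ ω, (g ω) ^ 2 with hC
  have hint_fg : Integrable (fun ω => f ω * g ω) ℙ := aux_int_mul hf hg
  have hint_g2 : Integrable (fun ω => (g ω) ^ 2) ℙ := hg.integrable_sq
  have hint_f2 : Integrable (fun ω => (f ω) ^ 2) ℙ := hf.integrable_sq
  have hexp : ∀ t : ℝ, ∫ ω, (f ω - t * g ω) ^ 2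
      = (∫ ω, (f ω) ^ 2) - 2 * t * J + t ^ 2 * C := by
    intro t
    calc ∫ ω, (f ω - t * g ω) ^ 2
        = ∫ ω, ((f ω) ^ 2 - (2 * t) * (f ω * g ω) + t ^ 2 * (g ω) ^ 2) := by
          congr 1; funext ω; ring
      _ = (∫ ω, (f ω) ^ 2) - 2 * t * J + t ^ 2 * C := by
          have e1 : ∫ ω, ((f ω) ^ 2 - (2 * t) * (f ω * g ω) + t ^ 2 * (g ω) ^ 2)
              = (∫ ω, ((f ω) ^ 2 - (2 * t) * (f ω * g ω))) + ∫ ω, t ^ 2 * (g ω) ^ 2 :=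
            integral_add (hint_f2.sub (hint_fg.const_mul _)) (hint_g2.const_mul _)
          have e2 : ∫ ω, ((f ω) ^ 2 - (2 * t) * (f ω * g ω))
              = (∫ ω, (f ω) ^ 2) - ∫ ω, (2 * t) * (f ω * g ω) :=
            integral_sub hint_f2 (hint_fg.const_mul _)
          rw [e1, e2, integral_const_mul, integral_const_mul]
  have key : ∀ t : ℝ, 0 ≤ t ^ 2 * C - 2 * t * J := by
    intro t
    have h := hmin t
    rw [hexp t] at h
    linarith
  have hC0 : 0 ≤ C := integral_nonneg fun ω => sq_nonneg _
  have hpos : (0:ℝ) < C + 1 := by linarith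
  have h1 := key (J / (C + 1))
  have h2 : (J / (C + 1)) ^ 2 * C - 2 * (J / (C + 1)) * J
      = (J ^ 2 * C - 2 * J ^ 2 * (C + 1)) / (C + 1) ^ 2 := by
    field_simp
  rw [h2] at h1
  have h3 : 0 ≤ J ^ 2 * C - 2 * J ^ 2 * (C + 1) := by
    have := mul_le_mul_of_nonneg_right h1 (le_of_lt (pow_pos hpos 2))
    simpa [div_mul_cancel₀, ne_of_gt (pow_pos hpos 2)] using this
  nlinarith [sq_nonneg J]

/-- Almost surely,
`E[e | x] = θ̃'(I_d − P_{M̃})(E[z̃ | x] − P_{M̃} z̃)`, where `E[z̃ | x]` is the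
componentwise conditional expectation of `z̃` given the σ-algebra generated by `x`. -/
theorem stmt_5
    {Ω : Type*} [MeasureSpace Ω] [IsProbabilityMeasure (ℙ : Measure Ω)]
    {d p : ℕ} (hpd : p < d)
    (z : Ω → Fin d → ℝ) (hzm : Measurable z)
    (hz2 : ∀ i, MemLp (fun ω => z ω i) 2 ℙ)
    (μv : Fin d → ℝ) (hμ : ∀ i, ∫ ω, z ω i = μv i)
    (Sg : Matrix (Fin d) (Fin d) ℝ) (hSgpd : Sg.PosDef)
    (hSg : ∀ i j, ∫ ω, (z ω i - μv i) * (z ω j - μv j) = Sg i j)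
    (ε : Ω → ℝ) (hεm : Measurable ε) (hε2 : MemLp ε 2 ℙ)
    (hεmean : ∫ ω, ε ω = 0)
    (σ2 : ℝ) (hσ2 : 0 < σ2) (hεvar : ∫ ω, (ε ω) ^ 2 = σ2)
    (hindep : IndepFun z ε)
    (ϑ : ℝ) (θ : Fin d → ℝ)
    (y : Ω → ℝ) (hy : ∀ ω, y ω = ϑ + θ ⬝ᵥ z ω + ε ω)
    (M : Matrix (Fin d) (Fin p) ℝ) (hM : M.rank = p)
    (x : Ω → Fin p → ℝ) (hx : ∀ ω, x ω = Mᵀ *ᵥ z ω)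
    -- the surrogate parameters (α, β): the minimizers of E[(y − a − b'x)²]
    (α : ℝ) (β : Fin p → ℝ)
    (hmin : ∀ (a : ℝ) (b : Fin p → ℝ),
        ∫ ω, (y ω - α - β ⬝ᵥ x ω) ^ 2 ≤ ∫ ω, (y ω - a - b ⬝ᵥ x ω) ^ 2)
    (e : Ω → ℝ) (he : ∀ ω, e ω = y ω - α - β ⬝ᵥ x ω)
    (s2 : ℝ) (hs2 : s2 = ∫ ω, (e ω) ^ 2)
    -- the representation z = μ + Σ^{1/2} R z̃ with Σ^{1/2} the symmetric positive
    -- definite square root of Σ, R orthogonal, E[z̃] = 0 and E[z̃ z̃'] = I_d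
    (S : Matrix (Fin d) (Fin d) ℝ) (hSpd : S.PosDef) (hSsq : S * S = Sg)
    (R : Matrix (Fin d) (Fin d) ℝ) (hR : Rᵀ * R = 1)
    (zt : Ω → Fin d → ℝ) (hztm : Measurable zt)
    (hzt2 : ∀ i, MemLp (fun ω => zt ω i) 2 ℙ)
    (hztmean : ∀ i, ∫ ω, zt ω i = 0)
    (hztcov : ∀ i j, ∫ ω, zt ω i * zt ω j = (1 : Matrix (Fin d) (Fin d) ℝ) i j)
    (hzrep : ∀ ω, z ω = μv + S *ᵥ (R *ᵥ zt ω))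
    -- θ̃ = R'Σ^{1/2}θ, M̃ = R'Σ^{1/2}M and the projection P = M̃(M̃'M̃)⁻¹M̃'
    (θt : Fin d → ℝ) (hθt : θt = Rᵀ *ᵥ (S *ᵥ θ))
    (Mt : Matrix (Fin d) (Fin p) ℝ) (hMt : Mt = Rᵀ * S * M)
    (P : Matrix (Fin d) (Fin d) ℝ) (hP : P = Mt * (Mtᵀ * Mt)⁻¹ * Mtᵀ)
    -- the σ-algebra generated by x
    (mx : MeasurableSpace Ω) (hmx : mx = MeasurableSpace.comap x inferInstance)
    :
    ∀ᵐ ω ∂ℙ, (ℙ[e|mx]) ω =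
      θt ⬝ᵥ ((1 - P) *ᵥ (fun i => (ℙ[fun ω' => zt ω' i|mx]) ω - (P *ᵥ zt ω) i)) := by
  letI m0 : MeasurableSpace Ω := MeasureSpace.toMeasurableSpace
  -- ## Matrix facts
  have hSsym : Sᵀ = S := by
    have h := hSpd.isHermitian
    ext i j
    have h2 := congrFun (congrFun h i) j
    simpa [Matrix.conjTranspose_apply, Matrix.transpose_apply] using h2
  have hRRT : R * Rᵀ = 1 := mul_eq_one_comm.mp hR
  have hSdet : IsUnit S.det := hSpd.det_pos.ne'.isUnit
  have hMinj : ∀ v : Fin p → ℝ, M *ᵥ v = 0 → v = 0 := by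
    have h1 : Module.finrank ℝ (LinearMap.range M.mulVecLin) = p := hM
    have h2 := LinearMap.finrank_range_add_finrank_ker M.mulVecLin
    have h3 : Module.finrank ℝ (Fin p → ℝ) = p := by simp
    rw [h1, h3] at h2
    have hker : LinearMap.ker M.mulVecLin = ⊥ := Submodule.finrank_eq_zero.mp (by omega)
    intro v hv
    have : v ∈ LinearMap.ker M.mulVecLin := by
      simpa [Matrix.mulVecLin_apply] using hv
    simpa [hker] using this
  have hMtinj : ∀ v : Fin p → ℝ, Mt *ᵥ v = 0 → v = 0 := by
    intro v hv
    rw [hMt] at hv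
    have h1 : Rᵀ *ᵥ (S *ᵥ (M *ᵥ v)) = 0 := by
      rw [Matrix.mulVec_mulVec, Matrix.mulVec_mulVec]; exact hv
    have h2 : S *ᵥ (M *ᵥ v) = 0 := by
      have h := congrArg (fun u => R *ᵥ u) h1
      simpa [Matrix.mulVec_mulVec, ← Matrix.mul_assoc, hRRT] using h
    have h3 : M *ᵥ v = 0 := by
      have h := congrArg (fun u => S⁻¹ *ᵥ u) h2
      simpa [Matrix.mulVec_mulVec, ← Matrix.mul_assoc, Matrix.nonsing_inv_mul S hSdet] using h
    exact hMinj v h3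
  have hGunit : IsUnit ((Mtᵀ * Mt).det) := by
    rw [← Matrix.isUnit_iff_isUnit_det]
    rw [← Matrix.mulVec_injective_iff_isUnit]
    intro u v huv
    have hsub : (Mtᵀ * Mt) *ᵥ (u - v) = 0 := by
      rw [Matrix.mulVec_sub, huv, sub_self]
    have h0 : Mt *ᵥ (u - v) = 0 := by
      have hd : (Mt *ᵥ (u - v)) ⬝ᵥ (Mt *ᵥ (u - v)) = 0 := by
        have := aux_dot d p Mt (u - v) (Mt *ᵥ (u - v))
        rw [this, Matrix.mulVec_mulVec, hsub, dotProduct_zero]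
      exact dotProduct_self_eq_zero.mp hd
    have := hMtinj _ h0
    exact sub_eq_zero.mp this
  have hGinv1 : (Mtᵀ * Mt)⁻¹ * (Mtᵀ * Mt) = 1 := Matrix.nonsing_inv_mul _ hGunit
  have hPMt : P * Mt = Mt := by
    rw [hP, Matrix.mul_assoc (Mt * (Mtᵀ * Mt)⁻¹) Mtᵀ Mt,
      Matrix.mul_assoc Mt (Mtᵀ * Mt)⁻¹ (Mtᵀ * Mt), hGinv1, Matrix.mul_one]
  have hPP : P * P = P := by
    nth_rewrite 2 [hP]
    rw [← Matrix.mul_assoc, ← Matrix.mul_assoc, hPMt, ← hP]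
  have hGsym : (Mtᵀ * Mt)ᵀ = Mtᵀ * Mt := by
    rw [Matrix.transpose_mul, Matrix.transpose_transpose]
  have hPsym : Pᵀ = P := by
    rw [hP, Matrix.transpose_mul, Matrix.transpose_mul, Matrix.transpose_transpose,
      Matrix.transpose_nonsing_inv, hGsym, Matrix.mul_assoc]
  -- ## Pointwise decomposition
  have hMtT : Mtᵀ = Mᵀ * S * R := by
    rw [hMt, Matrix.transpose_mul, Matrix.transpose_mul, Matrix.transpose_transpose,
      hSsym, Matrix.mul_assoc]
  set w : Fin d → ℝ := θt - Mt *ᵥ β with hw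
  have hxz : ∀ ω, x ω = Mᵀ *ᵥ μv + Mtᵀ *ᵥ zt ω := by
    intro ω
    rw [hx, hzrep, Matrix.mulVec_add, hMtT]
    congr 1
    rw [Matrix.mulVec_mulVec, Matrix.mulVec_mulVec]
  have hθz : ∀ ω, θ ⬝ᵥ z ω = θ ⬝ᵥ μv + θt ⬝ᵥ zt ω := by
    intro ω
    rw [hzrep, dotProduct_add]
    congr 1
    rw [hθt, aux_dot d d Rᵀ (S *ᵥ θ) (zt ω), Matrix.transpose_transpose,
      aux_dot d d S θ (R *ᵥ zt ω), hSsym]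
  have hMtβ : ∀ ω, β ⬝ᵥ (Mtᵀ *ᵥ zt ω) = (Mt *ᵥ β) ⬝ᵥ zt ω :=
    fun ω => (aux_dot d p Mt β (zt ω)).symm
  set c : ℝ := ϑ + θ ⬝ᵥ μv - α - β ⬝ᵥ (Mᵀ *ᵥ μv) with hc
  have hedec : ∀ ω, e ω = c + w ⬝ᵥ zt ω + ε ω := by
    intro ω
    rw [he, hy, hxz, hθz, dotProduct_add, hMtβ, hw, hc,
      sub_dotProduct]
    ring
  -- ## Integrability
  have hzt1 : ∀ i, Integrable (fun ω => zt ω i) ℙ :=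
    fun i => (hzt2 i).integrable one_le_two
  have hε1 : Integrable ε ℙ := hε2.integrable one_le_two
  have hwzt2 : MemLp (fun ω => w ⬝ᵥ zt ω) 2 ℙ := by
    have hh : (fun ω => w ⬝ᵥ zt ω) = fun ω => ∑ i, w i * zt ω i := rfl
    rw [hh]
    exact memLp_finset_sum _ fun i _ => (hzt2 i).const_mul (w i)
  have he2 : MemLp e 2 ℙ := by
    have hh : e = fun ω => c + w ⬝ᵥ zt ω + ε ω := funext hedec
    rw [hh]
    exact ((memLp_const c).add hwzt2).add hε2
  have hx2 : ∀ j, MemLp (fun ω => x ω j) 2 ℙ := by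
    intro j
    have hh : (fun ω => x ω j) = fun ω => ∑ i, Mᵀ j i * z ω i := by
      funext ω; rw [hx]; rfl
    rw [hh]
    exact memLp_finset_sum _ fun i _ => (hz2 i).const_mul _
  -- ## Orthogonality from minimization
  have hE1 : ∫ ω, e ω = 0 := by
    have h := aux_orth he2 (memLp_const (1:ℝ)) ?_
    · simpa using h
    · intro t
      calc ∫ ω, (e ω) ^ 2 = ∫ ω, (y ω - α - β ⬝ᵥ x ω) ^ 2 := by simp only [he]
        _ ≤ ∫ ω, (y ω - (α + t) - β ⬝ᵥ x ω) ^ 2 := hmin (α + t) β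
        _ = ∫ ω, (e ω - t * 1) ^ 2 := by
            congr 1; funext ω; rw [he]; ring
  have hEx : ∀ j, ∫ ω, e ω * x ω j = 0 := by
    intro j
    apply aux_orth he2 (hx2 j)
    intro t
    calc ∫ ω, (e ω) ^ 2 = ∫ ω, (y ω - α - β ⬝ᵥ x ω) ^ 2 := by simp only [he]
      _ ≤ ∫ ω, (y ω - α - (β + t • (Pi.single j (1:ℝ) : Fin p → ℝ)) ⬝ᵥ x ω) ^ 2 := hmin α _
      _ = ∫ ω, (e ω - t * x ω j) ^ 2 := by
          congr 1; funext ω; rw [he]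
          have hd : (β + t • (Pi.single j (1:ℝ) : Fin p → ℝ)) ⬝ᵥ x ω = β ⬝ᵥ x ω + t * x ω j := by
            rw [add_dotProduct, smul_dotProduct, single_dotProduct]
            simp
          rw [hd]; ring
  -- ## Independence facts
  have hztm' : ∀ i, Measurable[MeasureSpace.toMeasurableSpace] fun ω => zt ω i :=
    fun i => hztm.eval
  have hxm : Measurable[MeasureSpace.toMeasurableSpace] x := by
    have hh : x = fun ω j => ∑ i, Mᵀ j i * z ω i := by
      funext ω; rw [hx]; rfl
    rw [hh]
    exact measurable_pi_lambda _ fun j => Finset.measurable_sum _ fun i _ =>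
      measurable_const.mul hzm.eval
  have hRdet : IsUnit R.det := IsUnit.of_mul_eq_one Rᵀ.det
    (by rw [← Matrix.det_mul, hRRT, Matrix.det_one])
  have hSRdet : IsUnit (S * R).det := by
    rw [Matrix.det_mul]
    exact hSdet.mul hRdet
  have hztz : ∀ i ω, zt ω i = ∑ k, (S * R)⁻¹ i k * (z ω k - μv k) := by
    intro i ω
    have h1 : z ω - μv = (S * R) *ᵥ zt ω := by
      rw [hzrep, Matrix.mulVec_mulVec]; abel
    have h2 : (S * R)⁻¹ *ᵥ (z ω - μv) = zt ω := by
      rw [h1, Matrix.mulVec_mulVec, Matrix.nonsing_inv_mul _ hSRdet, Matrix.one_mulVec]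
    have h3 := congrFun h2 i
    rw [← h3]
    rfl
  have hztiε : ∀ i, IndepFun (fun ω => zt ω i) ε ℙ := by
    intro i
    have hf : Measurable fun v : Fin d → ℝ => ∑ k, (S * R)⁻¹ i k * (v k - μv k) :=
      Finset.measurable_sum _ fun k _ =>
        measurable_const.mul ((measurable_pi_apply k).sub measurable_const)
    have h := hindep.comp hf measurable_id
    have hh : (fun v : Fin d → ℝ => ∑ k, (S * R)⁻¹ i k * (v k - μv k)) ∘ z
        = fun ω => zt ω i := by
      funext ω
      exact (hztz i ω).symm
    rwa [hh] at h
  have hεzt : ∀ i, ∫ ω, ε ω * zt ω i = 0 := by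
    intro i
    have h := (hztiε i).symm.integral_mul_eq_mul_integral hε1.aestronglyMeasurable (hzt1 i).aestronglyMeasurable
    have h2 : ∫ ω, ε ω * zt ω i = (∫ ω, ε ω) * ∫ ω, zt ω i := by
      simpa [Pi.mul_apply] using h
    rw [h2, hεmean, zero_mul]
  -- ## Moment computations
  have hint_ezt : ∀ i, Integrable (fun ω => e ω * zt ω i) ℙ :=
    fun i => aux_int_mul he2 (hzt2 i)
  have hezti : ∀ i, ∫ ω, e ω * zt ω i = c * 0 + w i := by
    intro i
    have hrw : (fun ω => e ω * zt ω i)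
        = fun ω => c * zt ω i + (∑ k, w k * (zt ω k * zt ω i)) + ε ω * zt ω i := by
      funext ω
      rw [hedec ω, add_mul, add_mul, dotProduct, Finset.sum_mul]
      simp [mul_assoc]
    have hint1 : Integrable (fun ω => c * zt ω i) ℙ := (hzt1 i).const_mul c
    have hint2 : Integrable (fun ω => ∑ k, w k * (zt ω k * zt ω i)) ℙ :=
      integrable_finset_sum _ fun k _ => (aux_int_mul (hzt2 k) (hzt2 i)).const_mul _
    have hint3 : Integrable (fun ω => ε ω * zt ω i) ℙ := aux_int_mul hε2 (hzt2 i)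
    calc ∫ ω, e ω * zt ω i
        = ∫ ω, (c * zt ω i + (∑ k, w k * (zt ω k * zt ω i)) + ε ω * zt ω i) := by
          rw [hrw]
      _ = (∫ ω, (c * zt ω i + ∑ k, w k * (zt ω k * zt ω i)))
          + ∫ ω, ε ω * zt ω i := integral_add (hint1.add hint2) hint3
      _ = ((∫ ω, c * zt ω i) + ∫ ω, ∑ k, w k * (zt ω k * zt ω i))
          + ∫ ω, ε ω * zt ω i := by rw [integral_add hint1 hint2]
      _ = c * 0 + w i := by
          rw [integral_const_mul, hztmean i, hεzt i,
            integral_finset_sum _ fun k _ => (aux_int_mul (hzt2 k) (hzt2 i)).const_mul _]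
          simp_rw [integral_const_mul, hztcov]
          simp [Matrix.one_apply]
  have hc0 : c = 0 := by
    have hint2 : Integrable (fun ω => ∑ k, w k * zt ω k) ℙ :=
      integrable_finset_sum _ fun k _ => (hzt1 k).const_mul _
    have hce : ∫ ω, e ω = c := by
      calc ∫ ω, e ω = ∫ ω, (c + ∑ k, w k * zt ω k + ε ω) := by
            congr 1; funext ω; rw [hedec ω]; rfl
        _ = (∫ ω, (c + ∑ k, w k * zt ω k)) + ∫ ω, ε ω :=
            integral_add ((integrable_const c).add hint2) hε1
        _ = ((∫ (_ : Ω), c) + ∫ ω, ∑ k, w k * zt ω k) + ∫ ω, ε ω := by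
            rw [integral_add (integrable_const c) hint2]
        _ = c := by
            rw [hεmean, integral_finset_sum _ fun k _ => (hzt1 k).const_mul _]
            simp_rw [integral_const_mul, hztmean]
            simp
    rw [hce] at hE1
    exact hE1
  have hezti' : ∀ i, ∫ ω, e ω * zt ω i = w i := by
    intro i; rw [hezti i, hc0]; ring
  have hMtw : Mtᵀ *ᵥ w = 0 := by
    funext j
    have h0 := hEx j
    have hrw : (fun ω => e ω * x ω j)
        = fun ω => (Mᵀ *ᵥ μv) j * e ω + ∑ i, Mtᵀ j i * (e ω * zt ω i) := by
      funext ω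
      have hxj : x ω j = (Mᵀ *ᵥ μv) j + ∑ i, Mtᵀ j i * zt ω i := by
        rw [hxz ω]; rfl
      rw [hxj, mul_add, Finset.mul_sum, mul_comm (e ω) ((Mᵀ *ᵥ μv) j)]
      congr 1
      exact Finset.sum_congr rfl fun i _ => by ring
    have hint1 : Integrable (fun ω => (Mᵀ *ᵥ μv) j * e ω) ℙ :=
      (he2.integrable one_le_two).const_mul _
    have hint2 : Integrable (fun ω => ∑ i, Mtᵀ j i * (e ω * zt ω i)) ℙ :=
      integrable_finset_sum _ fun i _ => (hint_ezt i).const_mul _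
    have hcalc : ∫ ω, e ω * x ω j = (Mtᵀ *ᵥ w) j := by
      calc ∫ ω, e ω * x ω j
          = ∫ ω, ((Mᵀ *ᵥ μv) j * e ω + ∑ i, Mtᵀ j i * (e ω * zt ω i)) := by rw [hrw]
        _ = (∫ ω, (Mᵀ *ᵥ μv) j * e ω) + ∫ ω, ∑ i, Mtᵀ j i * (e ω * zt ω i) :=
            integral_add hint1 hint2
        _ = (Mtᵀ *ᵥ w) j := by
            rw [integral_const_mul, hE1, mul_zero, zero_add,
              integral_finset_sum _ fun i _ => (hint_ezt i).const_mul _]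
            simp_rw [integral_const_mul, hezti']
            rfl
    rw [hcalc] at h0
    exact h0
  have hPw : P *ᵥ w = 0 := by
    rw [hP, ← Matrix.mulVec_mulVec, hMtw, Matrix.mulVec_zero]
  have hweq : (1 - P) *ᵥ θt = w := by
    have hθtw : θt = w + Mt *ᵥ β := by rw [hw]; abel
    have hPθt : P *ᵥ θt = Mt *ᵥ β := by
      rw [hθtw, Matrix.mulVec_add, hPw, zero_add, Matrix.mulVec_mulVec, hPMt]
    rw [Matrix.sub_mulVec, Matrix.one_mulVec, hPθt, hθtw, add_sub_cancel_right]
  -- ## Conditional expectation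
  have hle : mx ≤ m0 := by
    rw [hmx]; exact hxm.comap_le
  have hindxε : IndepFun x ε ℙ := by
    have hg : Measurable fun v : Fin d → ℝ => Mᵀ *ᵥ v := by
      have hh : (fun v : Fin d → ℝ => Mᵀ *ᵥ v) = fun v j => ∑ i, Mᵀ j i * v i := by
        funext v; rfl
      rw [hh]
      exact measurable_pi_lambda _ fun j => Finset.measurable_sum _ fun i _ =>
        measurable_const.mul (measurable_pi_apply i)
    have h := hindep.comp hg measurable_id
    have hh2 : (fun v : Fin d → ℝ => Mᵀ *ᵥ v) ∘ z = x := by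
      funext ω; exact (hx ω).symm
    rwa [hh2] at h
  have hcondε : ℙ[ε|mx] =ᵐ[ℙ] fun _ => 0 := by
    have hmε : Measurable[MeasurableSpace.comap ε inferInstance] ε :=
      Measurable.of_comap_le le_rfl
    have hindp : ProbabilityTheory.Indep (MeasurableSpace.comap ε inferInstance) mx ℙ := by
      rw [hmx]
      exact hindxε.symm
    have h := condExp_indep_eq (μ := ℙ) hεm.comap_le hle hmε.stronglyMeasurable hindp
    refine h.trans ?_
    rw [hεmean]
  have hall : ∀ i, ℙ[fun ω => w i * zt ω i|mx]
      =ᵐ[ℙ] fun ω => w i * (ℙ[fun ω' => zt ω' i|mx]) ω := by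
    intro i
    have h := condExp_smul (μ := ℙ) (m := mx) (w i) (fun ω' => zt ω' i)
    exact h
  have hint_sum : Integrable (fun ω => ∑ i, w i * zt ω i) ℙ :=
    integrable_finset_sum _ fun i _ => (hzt1 i).const_mul _
  have hsum : ℙ[fun ω => ∑ i, w i * zt ω i|mx]
      =ᵐ[ℙ] fun ω => ∑ i, w i * (ℙ[fun ω' => zt ω' i|mx]) ω := by
    have hfs : (fun ω => ∑ i, w i * zt ω i) = ∑ i, (fun ω => w i * zt ω i) := by
      funext ω; simp
    rw [hfs]
    have h1 := condExp_finset_sum (μ := ℙ) (m := mx)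
      (f := fun i ω => w i * zt ω i) (fun (i : Fin d) (_ : i ∈ Finset.univ) => (hzt1 i).const_mul _)
    refine h1.trans ?_
    have h2 := eventually_countable_forall.mpr hall
    filter_upwards [h2] with ω hω
    simp only [Finset.sum_apply]
    exact Finset.sum_congr rfl fun i _ => hω i
  have he0 : e = (fun ω => ∑ i, w i * zt ω i) + ε := by
    funext ω
    rw [hedec ω, hc0]
    simp [dotProduct]
  have hconde : ℙ[e|mx] =ᵐ[ℙ] fun ω => ∑ i, w i * (ℙ[fun ω' => zt ω' i|mx]) ω := by
    rw [he0]
    refine (condExp_add (μ := ℙ) (m := mx) hint_sum hε1).trans ?_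
    filter_upwards [hsum, hcondε] with ω h1 h2
    rw [Pi.add_apply, h1, h2]
    simp
  -- ## Conclusion
  filter_upwards [hconde] with ω hω
  rw [hω]
  set E : Fin d → ℝ := fun i => (ℙ[fun ω' => zt ω' i|mx]) ω with hE
  have h1 : (fun i => E i - (P *ᵥ zt ω) i) = E - P *ᵥ zt ω := rfl
  rw [h1, Matrix.mulVec_sub, dotProduct_sub]
  have h2 : θt ⬝ᵥ ((1 - P) *ᵥ (P *ᵥ zt ω)) = 0 := by
    rw [Matrix.mulVec_mulVec, Matrix.sub_mul, Matrix.one_mul, hPP, sub_self,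
      Matrix.zero_mulVec, dotProduct_zero]
  have h3 : θt ⬝ᵥ ((1 - P) *ᵥ E) = w ⬝ᵥ E := by
    have h4 := aux_dot d d (1 - P)ᵀ θt E
    rw [Matrix.transpose_transpose] at h4
    rw [← h4, Matrix.transpose_sub, Matrix.transpose_one, hPsym, hweq]
  rw [h2, h3, sub_zero]
  rfl
end

section
/- Almost surely, E[e² | x] − s² = θ̃'(I_d − P_{M̃}){ E[z̃ z̃' | x] − ((I_d − P_{M̃}) + P_{M̃} z̃ z̃' P_{M̃}) }(I_d − P_{M̃})θ̃, where E[z̃ z̃' | x] denotes the entrywise conditional expectation of the matrix z̃ z̃' given the σ-algebra generated by x. -/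
open MeasureTheory Matrix ProbabilityTheory

private lemma foc_aux {C B : ℝ} (hC : 0 ≤ C) (h : ∀ t : ℝ, 0 ≤ C * t ^ 2 + B * t) : B = 0 := by
  have hC1 : (0:ℝ) < C + 1 := by linarith
  have h1 := h (-B / (C + 1))
  have h2 : C * (-B / (C + 1)) ^ 2 + B * (-B / (C + 1)) = -(B ^ 2) / (C + 1) ^ 2 := by
    field_simp
    ring
  rw [h2] at h1
  have h3 : (0:ℝ) < (C + 1) ^ 2 := by positivity
  rcases div_nonneg_iff.mp h1 with ⟨ha, _⟩ | ⟨_, hb⟩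
  · nlinarith [sq_nonneg B]
  · nlinarith

private lemma int_mul {Ω : Type*} [MeasureSpace Ω] [IsFiniteMeasure (ℙ : Measure Ω)]
    {f g : Ω → ℝ} (hf : MemLp f 2 ℙ) (hg : MemLp g 2 ℙ) :
    Integrable (fun ω => f ω * g ω) ℙ := by
  have h := MemLp.smul (p := 2) (q := 2) (r := 1) hg hf
  · have := memLp_one_iff_integrable.mp h
    exact this

/-- Almost surely,
`E[e² | x] − s² = θ̃'(I_d − P_{M̃}){E[z̃ z̃' | x] − ((I_d − P_{M̃}) + P_{M̃} z̃ z̃' P_{M̃})}(I_d − P_{M̃})θ̃`,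
where `E[z̃ z̃' | x]` is the entrywise conditional expectation of `z̃ z̃'` given the
σ-algebra generated by `x`. -/
theorem stmt_6
    {Ω : Type*} [MeasureSpace Ω] [IsProbabilityMeasure (ℙ : Measure Ω)]
    {d p : ℕ} (hpd : p < d)
    (z : Ω → Fin d → ℝ) (hzm : Measurable z)
    (hz2 : ∀ i, MemLp (fun ω => z ω i) 2 ℙ)
    (μv : Fin d → ℝ) (hμ : ∀ i, ∫ ω, z ω i = μv i)
    (Sg : Matrix (Fin d) (Fin d) ℝ) (hSgpd : Sg.PosDef)
    (hSg : ∀ i j, ∫ ω, (z ω i - μv i) * (z ω j - μv j) = Sg i j)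
    (ε : Ω → ℝ) (hεm : Measurable ε) (hε2 : MemLp ε 2 ℙ)
    (hεmean : ∫ ω, ε ω = 0)
    (σ2 : ℝ) (hσ2 : 0 < σ2) (hεvar : ∫ ω, (ε ω) ^ 2 = σ2)
    (hindep : IndepFun z ε)
    (ϑ : ℝ) (θ : Fin d → ℝ)
    (y : Ω → ℝ) (hy : ∀ ω, y ω = ϑ + θ ⬝ᵥ z ω + ε ω)
    (M : Matrix (Fin d) (Fin p) ℝ) (hM : M.rank = p)
    (x : Ω → Fin p → ℝ) (hx : ∀ ω, x ω = Mᵀ *ᵥ z ω)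
    -- the surrogate parameters (α, β): the minimizers of E[(y − a − b'x)²]
    (α : ℝ) (β : Fin p → ℝ)
    (hmin : ∀ (a : ℝ) (b : Fin p → ℝ),
        ∫ ω, (y ω - α - β ⬝ᵥ x ω) ^ 2 ≤ ∫ ω, (y ω - a - b ⬝ᵥ x ω) ^ 2)
    (e : Ω → ℝ) (he : ∀ ω, e ω = y ω - α - β ⬝ᵥ x ω)
    (s2 : ℝ) (hs2 : s2 = ∫ ω, (e ω) ^ 2)
    -- the representation z = μ + Σ^{1/2} R z̃ with Σ^{1/2} the symmetric positive
    -- definite square root of Σ, R orthogonal, E[z̃] = 0 and E[z̃ z̃'] = I_d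
    (S : Matrix (Fin d) (Fin d) ℝ) (hSpd : S.PosDef) (hSsq : S * S = Sg)
    (R : Matrix (Fin d) (Fin d) ℝ) (hR : Rᵀ * R = 1)
    (zt : Ω → Fin d → ℝ) (hztm : Measurable zt)
    (hzt2 : ∀ i, MemLp (fun ω => zt ω i) 2 ℙ)
    (hztmean : ∀ i, ∫ ω, zt ω i = 0)
    (hztcov : ∀ i j, ∫ ω, zt ω i * zt ω j = (1 : Matrix (Fin d) (Fin d) ℝ) i j)
    (hzrep : ∀ ω, z ω = μv + S *ᵥ (R *ᵥ zt ω))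
    -- θ̃ = R'Σ^{1/2}θ, M̃ = R'Σ^{1/2}M and the projection P = M̃(M̃'M̃)⁻¹M̃'
    (θt : Fin d → ℝ) (hθt : θt = Rᵀ *ᵥ (S *ᵥ θ))
    (Mt : Matrix (Fin d) (Fin p) ℝ) (hMt : Mt = Rᵀ * S * M)
    (P : Matrix (Fin d) (Fin d) ℝ) (hP : P = Mt * (Mtᵀ * Mt)⁻¹ * Mtᵀ)
    -- the σ-algebra generated by x
    (mx : MeasurableSpace Ω) (hmx : mx = MeasurableSpace.comap x inferInstance)
    -- z̃ has finite fourth moments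
    (hzt4 : ∀ i, MemLp (fun ω => zt ω i) 4 ℙ) :
    ∀ᵐ ω ∂ℙ, (ℙ[fun ω' => (e ω') ^ 2|mx]) ω - s2 =
      θt ⬝ᵥ (((1 - P) *
          ((Matrix.of fun i j => (ℙ[fun ω' => zt ω' i * zt ω' j|mx]) ω) -
            ((1 - P) + P * (Matrix.of fun i j => zt ω i * zt ω j) * P)) *
          (1 - P)) *ᵥ θt) := by
  classical
  set w : Fin d → ℝ := θt - Mt *ᵥ β with hw
  set c : ℝ := ϑ + θ ⬝ᵥ μv - α - β ⬝ᵥ (Mᵀ *ᵥ μv) with hcdef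
  -- basic matrix facts
  have hSsym : Sᵀ = S := by
    have h := hSpd.1
    rwa [Matrix.IsHermitian, conjTranspose_eq_transpose_of_trivial] at h
  have hSdet : IsUnit S.det := hSpd.det_pos.ne'.isUnit
  -- zt as a function of z
  set f : (Fin d → ℝ) → Fin d → ℝ := fun u => (Rᵀ * S⁻¹) *ᵥ (u - μv) with hfdef
  have hfm : Measurable f := by
    have hcont : Continuous f := by
      have h1 : Continuous fun u : Fin d → ℝ => u - μv := continuous_id.sub continuous_const
      exact ((Rᵀ * S⁻¹).mulVecLin.continuous_of_finiteDimensional).comp h1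
    exact hcont.measurable
  have hzt_eq : ∀ ω, zt ω = f (z ω) := by
    intro ω
    have h1 : z ω - μv = S *ᵥ (R *ᵥ zt ω) := by rw [hzrep]; abel
    show zt ω = (Rᵀ * S⁻¹) *ᵥ (z ω - μv)
    rw [h1, mulVec_mulVec, mulVec_mulVec, mul_assoc Rᵀ S⁻¹ S, Matrix.nonsing_inv_mul S hSdet,
      mul_one, hR, one_mulVec]
  -- integrability basics
  have hint_zz : ∀ i j, Integrable (fun ω => zt ω i * zt ω j) ℙ :=
    fun i j => int_mul (hzt2 i) (hzt2 j)
  have hint_zε : ∀ i, Integrable (fun ω => zt ω i * ε ω) ℙ := fun i => int_mul (hzt2 i) hε2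
  have hint_ε2 : Integrable (fun ω => ε ω ^ 2) ℙ := by
    have := int_mul hε2 hε2; simpa [sq] using this
  have hεz : ∀ k, ∫ ω, zt ω k * ε ω = 0 := by
    intro k
    have hgk : Measurable fun u : Fin d → ℝ => f u k := (measurable_pi_apply k).comp hfm
    have h1 : IndepFun (fun ω => zt ω k) ε ℙ := by
      have h2 := hindep.comp hgk measurable_id
      have h3 : (fun u : Fin d → ℝ => f u k) ∘ z = fun ω => zt ω k := by
        funext ω; simp [Function.comp, ← hzt_eq ω]
      rwa [h3] at h2
    have h4 := h1.integral_fun_mul_eq_mul_integral (hzt2 k).aestronglyMeasurable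
      hε2.aestronglyMeasurable
    simpa [hεmean] using h4
  -- representation of x and e
  have hMtT : Mtᵀ = Mᵀ * (S * R) := by
    rw [hMt, transpose_mul, transpose_mul, transpose_transpose, hSsym]
  have hxrep : ∀ ω, x ω = Mᵀ *ᵥ μv + Mtᵀ *ᵥ zt ω := by
    intro ω
    rw [hx, hzrep, mulVec_add, mulVec_mulVec, mulVec_mulVec, hMtT, Matrix.mul_assoc]
  have hθdot : ∀ u : Fin d → ℝ, θ ⬝ᵥ (S *ᵥ (R *ᵥ u)) = θt ⬝ᵥ u := by
    intro u
    rw [hθt, mulVec_mulVec, mulVec_mulVec, dotProduct_mulVec, ← mulVec_transpose]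
    congr 1
    rw [transpose_mul, hSsym]
  have hβdot : ∀ u : Fin d → ℝ, β ⬝ᵥ (Mtᵀ *ᵥ u) = (Mt *ᵥ β) ⬝ᵥ u := by
    intro u
    rw [dotProduct_mulVec, vecMul_transpose]
  have heq : ∀ ω, e ω = c + (w ⬝ᵥ zt ω + ε ω) := by
    intro ω
    rw [he, hy, hxrep]
    have h1 : θ ⬝ᵥ z ω = θ ⬝ᵥ μv + θt ⬝ᵥ zt ω := by
      rw [hzrep, dotProduct_add, hθdot]
    rw [h1, dotProduct_add, hβdot, hw, sub_dotProduct, hcdef]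
    ring
  -- L² membership
  have hdot2 : ∀ v : Fin d → ℝ, MemLp (fun ω => v ⬝ᵥ zt ω) 2 ℙ := by
    intro v
    have h1 : (fun ω => v ⬝ᵥ zt ω) = fun ω => ∑ i, v i * zt ω i := by
      funext ω; rfl
    rw [h1]
    exact memLp_finset_sum _ (fun i _ => (hzt2 i).const_mul (v i))
  have he2' : MemLp e 2 ℙ := by
    have h1 : e = fun ω => c + (w ⬝ᵥ zt ω + ε ω) := funext heq
    rw [h1]
    exact (memLp_const c).add ((hdot2 w).add hε2)
  have hx2 : ∀ j, MemLp (fun ω => x ω j) 2 ℙ := by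
    intro j
    have h1 : (fun ω => x ω j) = fun ω => (Mᵀ *ᵥ μv) j + (fun l => Mt l j) ⬝ᵥ zt ω := by
      funext ω; rw [hxrep ω]; rfl
    rw [h1]
    exact (memLp_const ((Mᵀ *ᵥ μv) j)).add (hdot2 (fun l => Mt l j))
  have hinte : Integrable e ℙ := he2'.integrable one_le_two
  have hinte2 : Integrable (fun ω => e ω ^ 2) ℙ := by
    have := int_mul he2' he2'; simpa [sq] using this
  have hintex : ∀ j, Integrable (fun ω => e ω * x ω j) ℙ := fun j => int_mul he2' (hx2 j)
  have hintx2 : ∀ j, Integrable (fun ω => x ω j ^ 2) ℙ := by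
    intro j; have := int_mul (hx2 j) (hx2 j); simpa [sq] using this
  -- first order condition: mean zero
  have hEe : ∫ ω, e ω = 0 := by
    have key : ∀ t : ℝ, 0 ≤ 1 * t ^ 2 + (-2 * ∫ ω, e ω) * t := by
      intro t
      have h1 := hmin (α + t) β
      have hL : (fun ω => (y ω - α - β ⬝ᵥ x ω) ^ 2) = fun ω => e ω ^ 2 := by
        funext ω; rw [he]
      have hRr : (fun ω => (y ω - (α + t) - β ⬝ᵥ x ω) ^ 2)
          = fun ω => e ω ^ 2 + ((-2 * t) * e ω + t ^ 2) := by
        funext ω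
        rw [show y ω - (α + t) - β ⬝ᵥ x ω = e ω - t from by rw [he]; ring]
        ring
      have hI1 : Integrable (fun ω => -2 * t * e ω) ℙ := hinte.const_mul _
      have hI2 : Integrable (fun _ : Ω => t ^ 2) ℙ := integrable_const _
      have hI3 : Integrable (fun ω => -2 * t * e ω + t ^ 2) ℙ := hI1.add hI2
      rw [hL, hRr, integral_add hinte2 hI3, integral_add hI1 hI2, integral_const_mul,
        integral_const] at h1
      simp only [probReal_univ, ENNReal.toReal_one, one_smul, smul_eq_mul] at h1
      nlinarith [h1]
    have hB := foc_aux (by norm_num) key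
    linarith
  -- first order condition: orthogonality to x
  have hEex : ∀ j, ∫ ω, e ω * x ω j = 0 := by
    intro j
    have hC : 0 ≤ ∫ ω, x ω j ^ 2 := integral_nonneg fun ω => sq_nonneg _
    have key : ∀ t : ℝ, 0 ≤ (∫ ω, x ω j ^ 2) * t ^ 2 + (-2 * ∫ ω, e ω * x ω j) * t := by
      intro t
      set bj : Fin p → ℝ := fun l => β l + if l = j then t else 0 with hbj
      have h1 := hmin α bj
      have hL : (fun ω => (y ω - α - β ⬝ᵥ x ω) ^ 2) = fun ω => e ω ^ 2 := by
        funext ω; rw [he]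
      have h2 : ∀ ω, bj ⬝ᵥ x ω = β ⬝ᵥ x ω + t * x ω j := by
        intro ω
        show (∑ l, (β l + if l = j then t else 0) * x ω l) = (∑ l, β l * x ω l) + t * x ω j
        simp [add_mul, Finset.sum_add_distrib, ite_mul, Finset.sum_ite_eq']
      have hRr : (fun ω => (y ω - α - bj ⬝ᵥ x ω) ^ 2)
          = fun ω => e ω ^ 2 + ((-2 * t) * (e ω * x ω j) + t ^ 2 * x ω j ^ 2) := by
        funext ω
        rw [show y ω - α - bj ⬝ᵥ x ω = e ω - t * x ω j from by rw [he, h2]; ring]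
        ring
      have hI1 : Integrable (fun ω => -2 * t * (e ω * x ω j)) ℙ := (hintex j).const_mul _
      have hI2 : Integrable (fun ω => t ^ 2 * x ω j ^ 2) ℙ := (hintx2 j).const_mul _
      have hI3 : Integrable (fun ω => -2 * t * (e ω * x ω j) + t ^ 2 * x ω j ^ 2) ℙ := hI1.add hI2
      rw [hL, hRr, integral_add hinte2 hI3, integral_add hI1 hI2, integral_const_mul,
        integral_const_mul] at h1
      nlinarith [h1]
    have hB := foc_aux hC key
    linarith
  -- consequences
  have hEdot : ∀ v : Fin d → ℝ, ∫ ω, v ⬝ᵥ zt ω = 0 := by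
    intro v
    have h1 : (fun ω => v ⬝ᵥ zt ω) = fun ω => ∑ i, v i * zt ω i := by funext ω; rfl
    rw [h1, integral_finset_sum _ (fun i _ => ((hzt2 i).integrable one_le_two).const_mul _)]
    simp [integral_const_mul, hztmean]
  have hc0 : c = 0 := by
    have h1 : (fun ω => e ω) = fun ω => c + (w ⬝ᵥ zt ω + ε ω) := funext heq
    have hI1 : Integrable (fun ω => w ⬝ᵥ zt ω) ℙ := (hdot2 w).integrable one_le_two
    have hI2 : Integrable ε ℙ := hε2.integrable one_le_two
    have hI3 : Integrable (fun ω => w ⬝ᵥ zt ω + ε ω) ℙ := hI1.add hI2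
    rw [h1, integral_add (integrable_const c) hI3, integral_add hI1 hI2, integral_const,
      hEdot, hεmean] at hEe
    simpa [measure_univ] using hEe
  have heq' : ∀ ω, e ω = w ⬝ᵥ zt ω + ε ω := fun ω => by rw [heq ω, hc0, zero_add]
  have hEez : ∀ k, ∫ ω, e ω * zt ω k = w k := by
    intro k
    have hrw : (fun ω => e ω * zt ω k)
        = fun ω => (∑ i, w i * (zt ω i * zt ω k)) + zt ω k * ε ω := by
      funext ω
      rw [heq' ω]
      show (∑ i, w i * zt ω i + ε ω) * zt ω k = _
      rw [add_mul, Finset.sum_mul]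
      congr 1
      · exact Finset.sum_congr rfl fun i _ => by ring
      · exact mul_comm _ _
    have hI1 : Integrable (fun ω => ∑ i, w i * (zt ω i * zt ω k)) ℙ :=
      integrable_finset_sum _ fun i _ => (hint_zz i k).const_mul _
    rw [hrw, integral_add hI1 (hint_zε k),
      integral_finset_sum _ (fun i _ => (hint_zz i k).const_mul _)]
    simp only [integral_const_mul, hztcov, hεz k, add_zero]
    simp [Matrix.one_apply]
  have hMw : Mtᵀ *ᵥ w = 0 := by
    funext j
    have h1 := hEex j
    have hrw : (fun ω => e ω * x ω j)
        = fun ω => (Mᵀ *ᵥ μv) j * e ω + ∑ l, Mt l j * (e ω * zt ω l) := by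
      funext ω
      rw [hxrep ω]
      show e ω * ((Mᵀ *ᵥ μv) j + ∑ l, Mtᵀ j l * zt ω l) = _
      rw [mul_add, Finset.mul_sum]
      congr 1
      · exact mul_comm _ _
      · exact Finset.sum_congr rfl fun l _ => by rw [Matrix.transpose_apply]; ring
    have hI1 : Integrable (fun ω => (Mᵀ *ᵥ μv) j * e ω) ℙ := hinte.const_mul _
    have hI2 : Integrable (fun ω => ∑ l, Mt l j * (e ω * zt ω l)) ℙ :=
      integrable_finset_sum _ fun l _ => (int_mul he2' (hzt2 l)).const_mul _
    rw [hrw, integral_add hI1 hI2,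
      integral_finset_sum _ (fun l _ => (int_mul he2' (hzt2 l)).const_mul _)] at h1
    simp only [integral_const_mul, hEe, mul_zero, zero_add, hEez] at h1
    show (∑ l, Mtᵀ j l * w l) = 0
    simpa [Matrix.transpose_apply] using h1
  -- matrix facts
  have hMinj : ∀ v : Fin p → ℝ, M *ᵥ v = 0 → v = 0 := by
    intro v hv
    have hfin : Module.finrank ℝ (LinearMap.range M.mulVecLin) = p := hM
    have h2 := LinearMap.finrank_range_add_finrank_ker M.mulVecLin
    rw [hfin] at h2
    have h3 : Module.finrank ℝ (Fin p → ℝ) = p := by simp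
    rw [h3] at h2
    have h4 : Module.finrank ℝ (LinearMap.ker M.mulVecLin) = 0 := by omega
    have h5 : LinearMap.ker M.mulVecLin = ⊥ := Submodule.finrank_eq_zero.mp h4
    have h6 : v ∈ LinearMap.ker M.mulVecLin := LinearMap.mem_ker.mpr hv
    rw [h5] at h6
    simpa using h6
  have hRdet : IsUnit Rᵀ.det := by
    have h1 := congrArg Matrix.det hR
    rw [Matrix.det_mul, Matrix.det_one] at h1
    exact IsUnit.of_mul_eq_one _ h1
  have hRS : IsUnit (Rᵀ * S).det := by
    rw [Matrix.det_mul]; exact hRdet.mul hSdet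
  have hMtinj : ∀ v : Fin p → ℝ, Mt *ᵥ v = 0 → v = 0 := by
    intro v hv
    apply hMinj
    have h1 : (Rᵀ * S) *ᵥ (M *ᵥ v) = 0 := by
      rw [mulVec_mulVec, ← hMt, hv]
    have hinj := Matrix.mulVec_injective_iff_isUnit.mpr ((Matrix.isUnit_iff_isUnit_det _).mpr hRS)
    have h2 : (Rᵀ * S) *ᵥ (M *ᵥ v) = (Rᵀ * S) *ᵥ 0 := by rw [h1, Matrix.mulVec_zero]
    exact hinj h2
  have hNdet : IsUnit (Mtᵀ * Mt).det := by
    by_contra h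
    have hdet0 : (Mtᵀ * Mt).det = 0 := by
      by_contra h0; exact h (isUnit_iff_ne_zero.mpr h0)
    obtain ⟨v, hv0, hv⟩ := (Matrix.exists_mulVec_eq_zero_iff).mpr hdet0
    have h2 : v ⬝ᵥ ((Mtᵀ * Mt) *ᵥ v) = (Mt *ᵥ v) ⬝ᵥ (Mt *ᵥ v) := by
      rw [← mulVec_mulVec, dotProduct_mulVec, vecMul_transpose]
    have h1 : (Mt *ᵥ v) ⬝ᵥ (Mt *ᵥ v) = 0 := by rw [← h2, hv, dotProduct_zero]
    exact hv0 (hMtinj v (dotProduct_self_eq_zero.mp h1))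
  have hPsym : Pᵀ = P := by
    simp [hP, transpose_mul, Matrix.transpose_nonsing_inv, transpose_transpose, Matrix.mul_assoc]
  have hPw : P *ᵥ w = 0 := by
    rw [hP, Matrix.mul_assoc, ← mulVec_mulVec, ← mulVec_mulVec, hMw, Matrix.mulVec_zero,
      Matrix.mulVec_zero]
  have hθw : θt = w + Mt *ᵥ β := by rw [hw]; abel
  have hPMt : P * Mt = Mt := by
    rw [hP, Matrix.mul_assoc (Mt * (Mtᵀ * Mt)⁻¹) Mtᵀ Mt,
      Matrix.mul_assoc Mt (Mtᵀ * Mt)⁻¹ (Mtᵀ * Mt), Matrix.nonsing_inv_mul _ hNdet,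
      Matrix.mul_one]
  have hPθ : P *ᵥ θt = Mt *ᵥ β := by
    have h1 : P *ᵥ θt = P *ᵥ (Mt *ᵥ β) := by
      conv_lhs => rw [hθw]
      rw [Matrix.mulVec_add, hPw, zero_add]
    rw [h1, mulVec_mulVec, hPMt]
  have h1Pθ : (1 - P) *ᵥ θt = w := by
    rw [sub_mulVec, one_mulVec, hPθ]
  -- value of s2
  have hA0 : ∫ ω, ∑ i, ∑ j, w i * w j * (zt ω i * zt ω j) = w ⬝ᵥ w := by
    rw [integral_finset_sum _
      (fun i _ => integrable_finset_sum _ fun j _ => (hint_zz i j).const_mul _)]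
    have hIi : ∀ i : Fin d, ∫ ω, ∑ j, w i * w j * (zt ω i * zt ω j) = w i * w i := by
      intro i
      rw [integral_finset_sum _ (fun j _ => (hint_zz i j).const_mul _)]
      have hIj : ∀ j : Fin d, ∫ ω, w i * w j * (zt ω i * zt ω j)
          = w i * w j * (1 : Matrix (Fin d) (Fin d) ℝ) i j := by
        intro j; rw [integral_const_mul, hztcov]
      simp only [hIj]
      simp [Matrix.one_apply]
    simp only [hIi]
    rfl
  have hIH1 : Integrable (fun ω => ∑ i, w i * (zt ω i * ε ω)) ℙ :=
    integrable_finset_sum _ fun i _ => (hint_zε i).const_mul _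
  have hB0 : ∫ ω, (2:ℝ) * (∑ i, w i * (zt ω i * ε ω)) + ε ω ^ 2 = σ2 := by
    have hIG2 : Integrable (fun ω => (2:ℝ) * ∑ i, w i * (zt ω i * ε ω)) ℙ := hIH1.const_mul _
    rw [integral_add hIG2 hint_ε2, integral_const_mul,
      integral_finset_sum _ (fun i _ => (hint_zε i).const_mul _)]
    simp only [integral_const_mul, hεz, mul_zero, Finset.sum_const_zero, hεvar]
    ring
  have hs2' : s2 = w ⬝ᵥ w + σ2 := by
    rw [hs2]
    have hrw : (fun ω => e ω ^ 2) = fun ω =>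
        (∑ i, ∑ j, w i * w j * (zt ω i * zt ω j))
          + ((2:ℝ) * (∑ i, w i * (zt ω i * ε ω)) + ε ω ^ 2) := by
      funext ω
      rw [heq' ω]
      have h1 : (w ⬝ᵥ zt ω) ^ 2 = ∑ i, ∑ j, w i * w j * (zt ω i * zt ω j) := by
        rw [sq]
        show (∑ i, w i * zt ω i) * (∑ j, w j * zt ω j) = _
        rw [Finset.sum_mul_sum]
        exact Finset.sum_congr rfl fun i _ => Finset.sum_congr rfl fun j _ => by ring
      have h2 : (w ⬝ᵥ zt ω) * ε ω = ∑ i, w i * (zt ω i * ε ω) := by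
        show (∑ i, w i * zt ω i) * ε ω = _
        rw [Finset.sum_mul]
        exact Finset.sum_congr rfl fun i _ => by ring
      rw [← h1, ← h2]
      ring
    have hIF : Integrable (fun ω => ∑ i, ∑ j, w i * w j * (zt ω i * zt ω j)) ℙ :=
      integrable_finset_sum _ fun i _ =>
        integrable_finset_sum _ fun j _ => (hint_zz i j).const_mul _
    have hIG : Integrable (fun ω => (2:ℝ) * (∑ i, w i * (zt ω i * ε ω)) + ε ω ^ 2) ℙ :=
      (hIH1.const_mul _).add hint_ε2
    rw [hrw, integral_add hIF hIG, hA0, hB0]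
  -- sigma algebras
  have hgm : Measurable fun u : Fin d → ℝ => Mᵀ *ᵥ u :=
    ((Mᵀ).mulVecLin.continuous_of_finiteDimensional).measurable
  have hmxle : mx ≤ (MeasureSpace.toMeasurableSpace : MeasurableSpace Ω) := by
    rw [hmx]
    have hxm : Measurable[MeasureSpace.toMeasurableSpace] x := by
      have h2 : x = fun ω => Mᵀ *ᵥ z ω := funext hx
      rw [h2]; exact hgm.comp hzm
    exact hxm.comap_le
  set mz : MeasurableSpace Ω := MeasurableSpace.comap z inferInstance with hmz
  have hmzle : mz ≤ (MeasureSpace.toMeasurableSpace : MeasurableSpace Ω) := hzm.comap_le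
  have hmxz : mx ≤ mz := by
    rw [hmx]
    rintro s ⟨B, hB, rfl⟩
    refine ⟨(fun u => Mᵀ *ᵥ u) ⁻¹' B, hgm hB, ?_⟩
    rw [← Set.preimage_comp, show (fun u => Mᵀ *ᵥ u) ∘ z = x from funext fun ω => (hx ω).symm]
  have hIndep : Indep (MeasurableSpace.comap ε inferInstance) mz ℙ :=
    ((IndepFun_iff_Indep z ε ℙ).mp hindep).symm
  have hIndepx : Indep (MeasurableSpace.comap ε inferInstance) mx ℙ :=
    indep_of_indep_of_le_right hIndep hmxz
  have hεle : MeasurableSpace.comap ε inferInstance ≤ (MeasureSpace.toMeasurableSpace : MeasurableSpace Ω) :=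
    hεm.comap_le
  -- conditional expectation of ε²
  have hcond_ε2 : ℙ[fun ω => ε ω ^ 2|mx] =ᵐ[ℙ] fun _ => σ2 := by
    have hεc : Measurable[MeasurableSpace.comap ε inferInstance] ε := comap_measurable ε
    have hsm : StronglyMeasurable[MeasurableSpace.comap ε inferInstance] fun ω => ε ω ^ 2 :=
      (hεc.pow_const 2).stronglyMeasurable
    have h1 := condExp_indep_eq hεle hmxle hsm hIndepx
    filter_upwards [h1] with ω hω
    rw [hω, hεvar]
  -- conditional expectation of zt i * ε
  have hcond_zε : ∀ i, ℙ[fun ω => zt ω i * ε ω|mx] =ᵐ[ℙ] 0 := by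
    intro i
    have hzi_mz : StronglyMeasurable[mz] fun ω => zt ω i := by
      apply Measurable.stronglyMeasurable
      have h1 : Measurable[mz] z := comap_measurable z
      have h2 : Measurable[mz] fun ω => f (z ω) i := ((measurable_pi_apply i).comp hfm).comp h1
      have h3 : (fun ω => zt ω i) = fun ω => f (z ω) i := by
        funext ω; rw [hzt_eq ω]
      rw [h3]; exact h2
    have hεI : Integrable ε ℙ := hε2.integrable one_le_two
    have hmulI : Integrable ((fun ω => zt ω i) * ε) ℙ := hint_zε i
    have h1 : ℙ[(fun ω => zt ω i) * ε|mz] =ᵐ[ℙ] (fun ω => zt ω i) * ℙ[ε|mz] :=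
      condExp_mul_of_stronglyMeasurable_left hzi_mz hmulI hεI
    have h2 : ℙ[ε|mz] =ᵐ[ℙ] fun _ => (0:ℝ) := by
      have hεsm : StronglyMeasurable[MeasurableSpace.comap ε inferInstance] ε :=
        (comap_measurable ε).stronglyMeasurable
      have h3 := condExp_indep_eq hεle hmzle hεsm hIndep
      filter_upwards [h3] with ω hω
      rw [hω, hεmean]
    have h4 : ℙ[(fun ω => zt ω i) * ε|mz] =ᵐ[ℙ] 0 := by
      filter_upwards [h1, h2] with ω hω1 hω2
      rw [hω1]
      show zt ω i * (ℙ[ε|mz]) ω = 0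
      rw [hω2, mul_zero]
    have h5 : ℙ[(fun ω => zt ω i) * ε|mx] =ᵐ[ℙ] ℙ[ℙ[(fun ω => zt ω i) * ε|mz]|mx] :=
      (condExp_condExp_of_le hmxz hmzle).symm
    have h6 := condExp_congr_ae (m := mx) h4
    rw [condExp_zero] at h6
    exact h5.trans h6
  -- conditional expectation of e²
  set H : Ω → ℝ := ∑ i : Fin d, (w i) • (fun ω => zt ω i * ε ω) with hH
  have hHapp : ∀ ω, H ω = ∑ i, w i * (zt ω i * ε ω) := by
    intro ω
    rw [hH, Finset.sum_apply]
    rfl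
  set F : Ω → ℝ :=
    ∑ ij : Fin d × Fin d, (w ij.1 * w ij.2) • (fun ω => zt ω ij.1 * zt ω ij.2) with hF
  have hFapp : ∀ ω, F ω = ∑ i, ∑ j, w i * w j * (zt ω i * zt ω j) := by
    intro ω
    rw [hF, Finset.sum_apply, Fintype.sum_prod_type]
    rfl
  have hIH : Integrable H ℙ := by
    rw [hH]
    exact integrable_finset_sum' _ fun i _ => (hint_zε i).smul (w i)
  have hIF : Integrable F ℙ := by
    rw [hF]
    exact integrable_finset_sum' _ fun (ij : Fin d × Fin d) _ =>
      (hint_zz ij.1 ij.2).smul (w ij.1 * w ij.2)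
  have hG : ℙ[H|mx] =ᵐ[ℙ] 0 := by
    have h1 := condExp_finset_sum (m := mx) (s := (Finset.univ : Finset (Fin d)))
      (f := fun i => (w i) • fun ω => zt ω i * ε ω)
      (fun i _ => (hint_zε i).smul (w i))
    have h2 : ∀ i : Fin d, ℙ[(w i) • fun ω => zt ω i * ε ω|mx] =ᵐ[ℙ] 0 := by
      intro i
      refine (condExp_smul (m := mx) (μ := ℙ) (w i) (fun ω => zt ω i * ε ω)).trans ?_
      filter_upwards [hcond_zε i] with ω hω
      show w i • (ℙ[fun ω' => zt ω' i * ε ω'|mx]) ω = 0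
      rw [show (ℙ[fun ω' => zt ω' i * ε ω'|mx]) ω = 0 from hω, smul_zero]
    have h4 : ∀ᵐ ω ∂ℙ, ∀ i : Fin d,
        (ℙ[(w i) • fun ω' => zt ω' i * ε ω'|mx]) ω = 0 :=
      (ae_all_iff).mpr fun i => h2 i
    refine h1.trans ?_
    filter_upwards [h4] with ω hω
    rw [Finset.sum_apply]
    show (∑ i, (ℙ[(w i) • fun ω' => zt ω' i * ε ω'|mx]) ω) = 0
    rw [Finset.sum_congr rfl fun i _ => hω i, Finset.sum_const_zero]
  have hcondF : ℙ[F|mx] =ᵐ[ℙ]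
      fun ω => ∑ i, ∑ j, w i * w j * ((ℙ[fun ω' => zt ω' i * zt ω' j|mx]) ω) := by
    have h1 := condExp_finset_sum (m := mx) (s := (Finset.univ : Finset (Fin d × Fin d)))
      (f := fun ij => (w ij.1 * w ij.2) • fun ω => zt ω ij.1 * zt ω ij.2)
      (fun ij _ => (hint_zz ij.1 ij.2).smul (w ij.1 * w ij.2))
    have h2 : ∀ᵐ ω ∂ℙ, ∀ ij : Fin d × Fin d,
        (ℙ[(w ij.1 * w ij.2) • fun ω' => zt ω' ij.1 * zt ω' ij.2|mx]) ω
          = w ij.1 * w ij.2 * ((ℙ[fun ω' => zt ω' ij.1 * zt ω' ij.2|mx]) ω) := by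
      rw [ae_all_iff]
      intro ij
      filter_upwards [condExp_smul (m := mx) (μ := ℙ) (w ij.1 * w ij.2)
        (fun ω' => zt ω' ij.1 * zt ω' ij.2)] with ω hω
      rw [hω]
      rfl
    refine h1.trans ?_
    filter_upwards [h2] with ω hω
    rw [Finset.sum_apply]
    calc (∑ ij : Fin d × Fin d,
          (ℙ[(w ij.1 * w ij.2) • fun ω' => zt ω' ij.1 * zt ω' ij.2|mx]) ω)
        = ∑ ij : Fin d × Fin d,
            w ij.1 * w ij.2 * ((ℙ[fun ω' => zt ω' ij.1 * zt ω' ij.2|mx]) ω) :=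
          Finset.sum_congr rfl fun ij _ => hω ij
      _ = ∑ i, ∑ j, w i * w j * ((ℙ[fun ω' => zt ω' i * zt ω' j|mx]) ω) :=
          Fintype.sum_prod_type _
  have he2eq : (fun ω' => (e ω') ^ 2) = F + ((2:ℝ) • H + fun ω => ε ω ^ 2) := by
    funext ω
    show e ω ^ 2 = F ω + ((2:ℝ) * H ω + ε ω ^ 2)
    rw [hFapp, hHapp, heq' ω]
    have h1 : (w ⬝ᵥ zt ω) ^ 2 = ∑ i, ∑ j, w i * w j * (zt ω i * zt ω j) := by
      rw [sq]
      show (∑ i, w i * zt ω i) * (∑ j, w j * zt ω j) = _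
      rw [Finset.sum_mul_sum]
      exact Finset.sum_congr rfl fun i _ => Finset.sum_congr rfl fun j _ => by ring
    have h2 : (w ⬝ᵥ zt ω) * ε ω = ∑ i, w i * (zt ω i * ε ω) := by
      show (∑ i, w i * zt ω i) * ε ω = _
      rw [Finset.sum_mul]
      exact Finset.sum_congr rfl fun i _ => by ring
    rw [← h1, ← h2]
    ring
  have hcond : ℙ[fun ω' => (e ω') ^ 2|mx] =ᵐ[ℙ]
      fun ω => (∑ i, ∑ j, w i * w j * ((ℙ[fun ω' => zt ω' i * zt ω' j|mx]) ω)) + σ2 := by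
    have hstep1 : ℙ[fun ω' => (e ω') ^ 2|mx]
        =ᵐ[ℙ] ℙ[F|mx] + ℙ[(2:ℝ) • H + fun ω => ε ω ^ 2|mx] := by
      rw [he2eq]
      exact condExp_add hIF ((hIH.smul (2:ℝ)).add hint_ε2) mx
    have hstep2 : ℙ[(2:ℝ) • H + (fun ω => ε ω ^ 2)|mx]
        =ᵐ[ℙ] ℙ[(2:ℝ) • H|mx] + ℙ[fun ω => ε ω ^ 2|mx] :=
      condExp_add (hIH.smul (2:ℝ)) hint_ε2 mx
    have hstep3 : ℙ[(2:ℝ) • H|mx] =ᵐ[ℙ] (0 : Ω → ℝ) := by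
      refine (condExp_smul (m := mx) (μ := ℙ) (2:ℝ) H).trans ?_
      filter_upwards [hG] with ω hω
      show (2:ℝ) • (ℙ[H|mx]) ω = (0 : Ω → ℝ) ω
      rw [show (ℙ[H|mx]) ω = 0 from hω, smul_zero]
      rfl
    filter_upwards [hstep1, hstep2, hstep3, hcondF, hcond_ε2] with ω h1 h2 h3 h4 h5
    rw [h1]
    show (ℙ[F|mx]) ω + (ℙ[(2:ℝ) • H + fun ω => ε ω ^ 2|mx]) ω = _
    rw [h2]
    show (ℙ[F|mx]) ω + ((ℙ[(2:ℝ) • H|mx]) ω + (ℙ[fun ω => ε ω ^ 2|mx]) ω) = _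
    rw [h4, h5, show (ℙ[(2:ℝ) • H|mx]) ω = (0 : Ω → ℝ) ω from h3]
    show _ + ((0:ℝ) + σ2) = _
    ring
  -- final algebraic identity
  have halg : ∀ A B : Matrix (Fin d) (Fin d) ℝ,
      θt ⬝ᵥ (((1 - P) * (A - ((1 - P) + P * B * P)) * (1 - P)) *ᵥ θt)
        = (∑ i, ∑ j, w i * w j * A i j) - w ⬝ᵥ w := by
    intro A B
    have h1P : (1 - P)ᵀ = 1 - P := by rw [transpose_sub, transpose_one, hPsym]
    have h1 : ((1 - P) * (A - ((1 - P) + P * B * P)) * (1 - P)) *ᵥ θt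
        = (1 - P) *ᵥ ((A - ((1 - P) + P * B * P)) *ᵥ w) := by
      rw [← h1Pθ, ← mulVec_mulVec, ← mulVec_mulVec]
    have h2 : ∀ u : Fin d → ℝ, θt ⬝ᵥ ((1 - P) *ᵥ u) = w ⬝ᵥ u := by
      intro u
      rw [dotProduct_mulVec, ← h1P, vecMul_transpose, h1Pθ]
    rw [h1, h2]
    have h3 : (A - ((1 - P) + P * B * P)) *ᵥ w
        = A *ᵥ w - ((1 - P) *ᵥ w + (P * B * P) *ᵥ w) := by
      rw [sub_mulVec, add_mulVec]
    have h4 : (P * B * P) *ᵥ w = 0 := by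
      rw [Matrix.mul_assoc, ← mulVec_mulVec, ← mulVec_mulVec, hPw, Matrix.mulVec_zero,
        Matrix.mulVec_zero]
    have h5 : (1 - P) *ᵥ w = w := by
      rw [sub_mulVec, one_mulVec, hPw, sub_zero]
    rw [h3, h4, h5, add_zero, dotProduct_sub]
    congr 1
    show (∑ i, w i * (A *ᵥ w) i) = _
    rw [Finset.sum_congr rfl fun i (_ : i ∈ Finset.univ) =>
      (show w i * (A *ᵥ w) i = ∑ j, w i * w j * A i j by
        show w i * (∑ j, A i j * w j) = _
        rw [Finset.mul_sum]
        exact Finset.sum_congr rfl fun j _ => by ring)]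
  -- conclusion
  filter_upwards [hcond] with ω hω
  rw [hω, hs2', halg (Matrix.of fun i j => (ℙ[fun ω' => zt ω' i * zt ω' j|mx]) ω)
    (Matrix.of fun i j => zt ω i * zt ω j)]
  show (∑ i, ∑ j, w i * w j * ((ℙ[fun ω' => zt ω' i * zt ω' j|mx]) ω)) + σ2 - (w ⬝ᵥ w + σ2)
      = (∑ i, ∑ j, w i * w j * ((ℙ[fun ω' => zt ω' i * zt ω' j|mx]) ω)) - w ⬝ᵥ w
  ring
end

section
/- (Lemma 1.) For each n ∈ ℕ, let (x₁, e₁), …, (x_n, e_n) be i.i.d. copies (defined on a common probability space, with distributions possibly depending on n) of a pair (x, e), where e is real-valued with s² = E[e²] ∈ (0,∞) and Var[e | x] > 0 almost surely. Define e_i* = s·(Var[e_i | x_i])^{−1/2}(e_i − E[e_i | x_i]), E = (e₁,…,e_n)' and E* = (e₁*,…,e_n*)'. Assume there exist nonnegative sequences (c_n) and (r_n) with n^m·c_n → 0 as n → ∞ for every m ∈ ℕ and n·r_n → 0 as n → ∞, such that for every n and every t > 0: P(|E[e₁|x₁]|/s > t) ≤ c_n/t + r_n and P(|E[e₁²|x₁]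 − s²|/s² > t) ≤ c_n/t + r_n. Then, as n → ∞: (i) for every k ∈ ℝ, n^k·‖E − E*‖/s → 0 in probability; (ii) for every k ∈ ℝ and every sequence P_n of (possibly random) symmetric idempotent n×n matrices, n^k·|E'P_nE − (E*)'P_nE*|/s² → 0 in probability; and (iii) max_{1≤i≤n} |Var[e_i|x_i]/s² − 1| → 0 in probability. -/
open MeasureTheory Matrix ProbabilityTheory Filter

section AuxLemmas

/-- Cauchy–Schwarz for dot products. -/
lemma aux_cs {n : ℕ} (u v : Fin n → ℝ) :
    |u ⬝ᵥ v| ≤ Real.sqrt (∑ i, u i ^ 2) * Real.sqrt (∑ i, v i ^ 2) := by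
  have h := Finset.sum_mul_sq_le_sq_mul_sq Finset.univ u v
  have h2 : |u ⬝ᵥ v| = Real.sqrt ((∑ i, u i * v i) ^ 2) := by
    rw [Real.sqrt_sq_eq_abs]; rfl
  rw [h2, ← Real.sqrt_mul (by positivity)]
  exact Real.sqrt_le_sqrt h

lemma aux_dot_self {n : ℕ} (u : Fin n → ℝ) : u ⬝ᵥ u = ∑ i, u i ^ 2 := by
  simp [dotProduct, sq]

lemma aux_sqrt_dot {n : ℕ} (u : Fin n → ℝ) :
    Real.sqrt (∑ i, u i ^ 2) ^ 2 = ∑ i, u i ^ 2 :=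
  Real.sq_sqrt (by positivity)

/-- Projection bound: a symmetric idempotent matrix is a contraction. -/
lemma aux_proj {n : ℕ} (P : Matrix (Fin n) (Fin n) ℝ) (hsym : Pᵀ = P)
    (hid : P * P = P) (v : Fin n → ℝ) :
    Real.sqrt (∑ i, (P *ᵥ v) i ^ 2) ≤ Real.sqrt (∑ i, v i ^ 2) := by
  set a := Real.sqrt (∑ i, (P *ᵥ v) i ^ 2) with ha
  set b := Real.sqrt (∑ i, v i ^ 2) with hb
  have ha0 : 0 ≤ a := Real.sqrt_nonneg _
  have hb0 : 0 ≤ b := Real.sqrt_nonneg _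
  have hkey : (P *ᵥ v) ⬝ᵥ (P *ᵥ v) = v ⬝ᵥ (P *ᵥ v) := by
    rw [Matrix.dotProduct_mulVec]
    have : (P *ᵥ v) ᵥ* P = P *ᵥ (P *ᵥ v) := by
      conv_lhs => rw [← hsym]
      rw [Matrix.vecMul_transpose, hsym]
    rw [this, Matrix.mulVec_mulVec, hid, dotProduct_comm]
  have h1 : a ^ 2 ≤ b * a := by
    rw [aux_sqrt_dot, ← aux_dot_self, hkey]
    calc v ⬝ᵥ (P *ᵥ v) ≤ |v ⬝ᵥ (P *ᵥ v)| := le_abs_self _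
      _ ≤ b * a := aux_cs v (P *ᵥ v)
  nlinarith

/-- Quadratic-form difference bound. -/
lemma aux_quad {n : ℕ} (P : Matrix (Fin n) (Fin n) ℝ) (hsym : Pᵀ = P)
    (hid : P * P = P) (a b : Fin n → ℝ) :
    |a ⬝ᵥ (P *ᵥ a) - b ⬝ᵥ (P *ᵥ b)| ≤
      Real.sqrt (∑ i, (a i - b i) ^ 2) *
        (Real.sqrt (∑ i, a i ^ 2) + Real.sqrt (∑ i, b i ^ 2)) := by
  have hident : a ⬝ᵥ (P *ᵥ a) - b ⬝ᵥ (P *ᵥ b) =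
      (fun i => a i - b i) ⬝ᵥ (P *ᵥ a) + b ⬝ᵥ (P *ᵥ fun i => a i - b i) := by
    have h1 : (fun i => a i - b i) = a - b := rfl
    rw [h1, sub_dotProduct, Matrix.mulVec_sub, dotProduct_sub]
    ring
  rw [hident]
  have h1 : |(fun i => a i - b i) ⬝ᵥ (P *ᵥ a)| ≤
      Real.sqrt (∑ i, (a i - b i) ^ 2) * Real.sqrt (∑ i, a i ^ 2) := by
    calc |(fun i => a i - b i) ⬝ᵥ (P *ᵥ a)|
        ≤ Real.sqrt (∑ i, (a i - b i) ^ 2) * Real.sqrt (∑ i, (P *ᵥ a) i ^ 2) :=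
          aux_cs _ _
      _ ≤ _ := mul_le_mul_of_nonneg_left (aux_proj P hsym hid a) (Real.sqrt_nonneg _)
  have h2 : |b ⬝ᵥ (P *ᵥ fun i => a i - b i)| ≤
      Real.sqrt (∑ i, b i ^ 2) * Real.sqrt (∑ i, (a i - b i) ^ 2) := by
    calc |b ⬝ᵥ (P *ᵥ fun i => a i - b i)|
        ≤ Real.sqrt (∑ i, b i ^ 2) * Real.sqrt (∑ i, (P *ᵥ fun i => a i - b i) i ^ 2) :=
          aux_cs _ _
      _ ≤ _ := mul_le_mul_of_nonneg_left (aux_proj P hsym hid _) (Real.sqrt_nonneg _)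
  calc |(fun i => a i - b i) ⬝ᵥ (P *ᵥ a) + b ⬝ᵥ (P *ᵥ fun i => a i - b i)|
      ≤ |(fun i => a i - b i) ⬝ᵥ (P *ᵥ a)| + |b ⬝ᵥ (P *ᵥ fun i => a i - b i)| :=
        abs_add_le _ _
    _ ≤ _ := by rw [mul_add]; linarith

/-- sqrt-of-sum bound from a coordinatewise bound. -/
lemma aux_sqrt_sum_le {n : ℕ} (f : Fin n → ℝ) (C : ℝ) (hC : 0 ≤ C)
    (h : ∀ i, |f i| ≤ C) :
    Real.sqrt (∑ i, f i ^ 2) ≤ Real.sqrt n * C := by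
  have hsum : ∑ i, f i ^ 2 ≤ (n : ℝ) * C ^ 2 := by
    calc ∑ i, f i ^ 2 ≤ ∑ _i : Fin n, C ^ 2 :=
          Finset.sum_le_sum fun i _ => by
            rw [← sq_abs]; exact pow_le_pow_left₀ (abs_nonneg _) (h i) 2
      _ = (n : ℝ) * C ^ 2 := by simp [mul_comm]
  calc Real.sqrt (∑ i, f i ^ 2) ≤ Real.sqrt ((n : ℝ) * C ^ 2) := Real.sqrt_le_sqrt hsum
    _ = Real.sqrt n * C := by rw [Real.sqrt_mul (by positivity), Real.sqrt_sq hC]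

set_option maxHeartbeats 1000000 in
/-- Core deterministic bound on `e - e*`. -/
lemma auxA {s2 t e m1 m2 nn : ℝ} (hs2 : 0 < s2) (ht0 : 0 < t) (ht : t ≤ 1/4)
    (hn : 1 ≤ nn)
    (h1 : |m1| ≤ t * Real.sqrt s2) (h2 : |m2 - s2| ≤ t * s2)
    (he : |e| ≤ nn * Real.sqrt s2) :
    |e - Real.sqrt s2 * (Real.sqrt (m2 - m1 ^ 2))⁻¹ * (e - m1)| ≤
      6 * nn * t * Real.sqrt s2 := by
  set s := Real.sqrt s2 with hs
  have hspos : 0 < s := Real.sqrt_pos.mpr hs2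
  have hss : s ^ 2 = s2 := Real.sq_sqrt hs2.le
  have hm1sq : m1 ^ 2 ≤ t ^ 2 * s2 := by
    nlinarith [sq_abs m1, pow_le_pow_left₀ (abs_nonneg m1) h1 2]
  have h2' := abs_le.mp h2
  have hVlb : s2 / 2 ≤ m2 - m1 ^ 2 := by nlinarith
  have hVub : m2 - m1 ^ 2 ≤ 3 / 2 * s2 := by nlinarith
  have hVpos : 0 < m2 - m1 ^ 2 := lt_of_lt_of_le (by linarith) hVlb
  set w := Real.sqrt (m2 - m1 ^ 2) with hw
  have hw2 : w ^ 2 = m2 - m1 ^ 2 := Real.sq_sqrt hVpos.le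
  have hwpos : 0 < w := Real.sqrt_pos.mpr hVpos
  have hwge : s / 2 ≤ w := by nlinarith [sq_nonneg (w - s/2), sq_nonneg (w + s/2)]
  have hd1 : w - s ≤ 2 * t * s := by
    rcases le_or_gt w s with h | h
    · linarith [mul_pos (mul_pos two_pos ht0) hspos]
    · have e1 : (w - s) * s ≤ (w - s) * (w + s) :=
        mul_le_mul_of_nonneg_left (by linarith) (by linarith)
      have e2 : (w - s) * (w + s) ≤ t * s2 := by nlinarith
      have hts : t * s2 = (t * s) * s := by rw [← hss]; ring
      have e3 : (w - s) * s ≤ (t * s) * s := by linarith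
      have h4 := le_of_mul_le_mul_right e3 hspos
      linarith [mul_pos ht0 hspos]
  have hd2 : s - w ≤ 2 * t * s := by
    rcases le_or_gt s w with h | h
    · linarith [mul_pos (mul_pos two_pos ht0) hspos]
    · have e1 : (s - w) * s ≤ (s - w) * (s + w) :=
        mul_le_mul_of_nonneg_left (by linarith) (by linarith)
      have e2 : (s - w) * (s + w) ≤ 2 * t * s2 := by nlinarith
      have hts : 2 * t * s2 = (2 * t * s) * s := by rw [← hss]; ring
      have e3 : (s - w) * s ≤ (2 * t * s) * s := by linarith
      exact le_of_mul_le_mul_right e3 hspos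
  have hrw : e - s * w⁻¹ * (e - m1) = ((w - s) * e + s * m1) / w := by
    field_simp
    ring
  rw [hrw, abs_div, abs_of_pos hwpos, div_le_iff₀ hwpos]
  have habs0 : |(w - s) * e + s * m1| ≤ |w - s| * |e| + s * |m1| := by
    calc |(w - s) * e + s * m1| ≤ |(w - s) * e| + |s * m1| := abs_add_le _ _
      _ = |w - s| * |e| + s * |m1| := by
          rw [abs_mul, abs_mul, abs_of_pos hspos]
  have habs : |(w - s) * e + s * m1| ≤ 2 * t * s * (nn * s) + s * (t * s) := by
    have habsws : |w - s| ≤ 2 * t * s := abs_le.mpr ⟨by linarith, hd1⟩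
    have h0 : 0 ≤ |e| := abs_nonneg e
    have h00 : 0 ≤ 2 * t * s := by positivity
    calc |(w - s) * e + s * m1| ≤ |w - s| * |e| + s * |m1| := habs0
      _ ≤ 2 * t * s * (nn * s) + s * (t * s) := by gcongr
  calc |(w - s) * e + s * m1| ≤ 2 * t * s * (nn * s) + s * (t * s) := habs
    _ ≤ 6 * nn * t * s * (s / 2) := by
        nlinarith [mul_nonneg (mul_nonneg (sub_nonneg.mpr hn) ht0.le) (sq_nonneg s)]
    _ ≤ 6 * nn * t * s * w := by
        have h6 : 0 ≤ 6 * nn * t * s := by positivity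
        exact mul_le_mul_of_nonneg_left hwge h6

/-- Conditional-variance ratio bound. -/
lemma auxC {s2 m1 m2 t1 t2 : ℝ} (hs2 : 0 < s2) (ht1 : t1 ≤ 1)
    (h1 : |m1| / Real.sqrt s2 ≤ t1) (h2 : |m2 - s2| / s2 ≤ t2) :
    |(m2 - m1 ^ 2) / s2 - 1| ≤ t2 + t1 := by
  have hspos : 0 < Real.sqrt s2 := Real.sqrt_pos.mpr hs2
  have hss : Real.sqrt s2 ^ 2 = s2 := Real.sq_sqrt hs2.le
  have h1' : |m1| ≤ t1 * Real.sqrt s2 := by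
    rw [div_le_iff₀ hspos] at h1; exact h1
  have ht10 : 0 ≤ t1 := le_trans (by positivity) h1
  have ha1 : m1 ^ 2 ≤ t1 ^ 2 * s2 := by
    nlinarith [sq_abs m1, pow_le_pow_left₀ (abs_nonneg m1) h1' 2, hss]
  have ht1sq : t1 ^ 2 ≤ t1 := by nlinarith
  have hm1 : m1 ^ 2 ≤ t1 * s2 := by nlinarith
  have h2' : |m2 - s2| ≤ t2 * s2 := by
    rw [div_le_iff₀ hs2] at h2; exact h2
  have h2'' := abs_le.mp h2'
  have hexpr : (m2 - m1 ^ 2) / s2 - 1 = (m2 - s2 - m1 ^ 2) / s2 := by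
    field_simp
    ring
  rw [hexpr, abs_div, abs_of_pos hs2, div_le_iff₀ hs2]
  have htri : |m2 - s2 - m1 ^ 2| ≤ |m2 - s2| + m1 ^ 2 := by
    calc |m2 - s2 - m1 ^ 2| ≤ |m2 - s2| + |m1 ^ 2| := abs_sub _ _
      _ = |m2 - s2| + m1 ^ 2 := by rw [abs_of_nonneg (sq_nonneg m1)]
  nlinarith

lemma aux_sqrt_le_self {nn : ℝ} (h : 1 ≤ nn) : Real.sqrt nn ≤ nn := by
  nlinarith [Real.sq_sqrt (by linarith : (0:ℝ) ≤ nn), Real.sqrt_nonneg nn]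

end AuxLemmas


set_option maxHeartbeats 1600000 in
/-- **Lemma 1.** For each `n`, let `(x₁,e₁),…,(xₙ,eₙ)` be i.i.d. copies
(on a common probability space `Ω n`, distributions possibly depending on `n`) of a pair
`(x,e)` with `e` real-valued, `s² = E[e²] ∈ (0,∞)` and `Var[e|x] > 0` a.s.  With
`eᵢ* = s·(Var[eᵢ|xᵢ])^{−1/2}(eᵢ − E[eᵢ|xᵢ])`, `E = (e₁,…,eₙ)'`, `E* = (e₁*,…,eₙ*)'`,
assume there are nonnegative sequences `cₙ`, `rₙ` with `n^m·cₙ → 0` for every `m` and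
`n·rₙ → 0`, such that for all `n` and `t > 0`:
`P(|E[e₁|x₁]|/s > t) ≤ cₙ/t + rₙ` and `P(|E[e₁²|x₁] − s²|/s² > t) ≤ cₙ/t + rₙ`.
Then, as `n → ∞`: (i) `n^k‖E − E*‖/s → 0` in probability for every `k ∈ ℝ`;
(ii) `n^k|E'PₙE − (E*)'PₙE*|/s² → 0` in probability for every `k ∈ ℝ` and every
sequence `Pₙ` of (possibly random) symmetric idempotent `n×n` matrices;
(iii) `max_{1≤i≤n} |Var[eᵢ|xᵢ]/s² − 1| → 0` in probability. -/
theorem stmt_13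
    (Ω : ℕ → Type*) [∀ n, MeasureSpace (Ω n)]
    [∀ n, IsProbabilityMeasure (ℙ : Measure (Ω n))]
    -- the regressors xᵢ take values in ℝ^{q n}, the errors eᵢ in ℝ
    (q : ℕ → ℕ)
    (x : ∀ n, Fin n → Ω n → (Fin (q n) → ℝ)) (e : ∀ n, Fin n → Ω n → ℝ)
    (hxm : ∀ n i, Measurable (x n i)) (hem : ∀ n i, Measurable (e n i))
    -- the pairs (xᵢ, eᵢ), 1 ≤ i ≤ n, are independent and identically distributed
    (hindep : ∀ n, iIndepFun
        (fun (i : Fin n) ω => (x n i ω, e n i ω)) ℙ)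
    (hident : ∀ n (i j : Fin n),
        IdentDistrib (fun ω => (x n i ω, e n i ω)) (fun ω => (x n j ω, e n j ω)) ℙ ℙ)
    (he2 : ∀ n i, MemLp (e n i) 2 ℙ)
    -- s² = E[e²] ∈ (0,∞)
    (s2 : ℕ → ℝ) (hs2 : ∀ n (i : Fin n), s2 n = ∫ ω, (e n i ω) ^ 2)
    (hs2pos : ∀ n, 0 < s2 n)
    -- the σ-algebras generated by the xᵢ, the conditional moments, and Var[eᵢ|xᵢ]
    (mx : ∀ n, Fin n → MeasurableSpace (Ω n))
    (hmx : ∀ n i, mx n i = MeasurableSpace.comap (x n i) inferInstance)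
    (m1 : ∀ n, Fin n → Ω n → ℝ) (hm1 : ∀ n i, m1 n i = ℙ[e n i|mx n i])
    (m2 : ∀ n, Fin n → Ω n → ℝ)
    (hm2 : ∀ n i, m2 n i = ℙ[fun ω => (e n i ω) ^ 2|mx n i])
    (V : ∀ n, Fin n → Ω n → ℝ)
    (hV : ∀ n i ω, V n i ω = m2 n i ω - (m1 n i ω) ^ 2)
    (hVpos : ∀ n i, ∀ᵐ ω ∂(ℙ : Measure (Ω n)), 0 < V n i ω)
    -- the substitute errors eᵢ*
    (estar : ∀ n, Fin n → Ω n → ℝ)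
    (hestar : ∀ n i ω, estar n i ω =
      Real.sqrt (s2 n) * (Real.sqrt (V n i ω))⁻¹ * (e n i ω - m1 n i ω))
    -- the tail assumptions on the conditional moments
    (c r : ℕ → ℝ) (hc0 : ∀ n, 0 ≤ c n) (hr0 : ∀ n, 0 ≤ r n)
    (hcdecay : ∀ m : ℕ, Tendsto (fun n : ℕ => (n : ℝ) ^ m * c n) atTop (nhds 0))
    (hrdecay : Tendsto (fun n : ℕ => (n : ℝ) * r n) atTop (nhds 0))
    (htail1 : ∀ n (i : Fin n), ∀ t : ℝ, 0 < t →
      (ℙ {ω | t < |m1 n i ω| / Real.sqrt (s2 n)}).toReal ≤ c n / t + r n)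
    (htail2 : ∀ n (i : Fin n), ∀ t : ℝ, 0 < t →
      (ℙ {ω | t < |m2 n i ω - s2 n| / s2 n}).toReal ≤ c n / t + r n) :
    -- (i)  n^k ‖E − E*‖/s → 0 in probability
    (∀ k : ℝ, ∀ δ : ℝ, 0 < δ → Tendsto
        (fun n : ℕ => (ℙ {ω | δ < (n : ℝ) ^ k *
            Real.sqrt (∑ i : Fin n, (e n i ω - estar n i ω) ^ 2) /
              Real.sqrt (s2 n)}).toReal)
        atTop (nhds 0)) ∧
    -- (ii)  n^k |E'PₙE − (E*)'PₙE*|/s² → 0 in probability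
    (∀ k : ℝ, ∀ P : ∀ n, Ω n → Matrix (Fin n) (Fin n) ℝ,
      (∀ n, Measurable fun ω (i j : Fin n) => P n ω i j) →
      (∀ n ω, (P n ω)ᵀ = P n ω ∧ P n ω * P n ω = P n ω) →
      ∀ δ : ℝ, 0 < δ → Tendsto
        (fun n : ℕ => (ℙ {ω | δ < (n : ℝ) ^ k *
            |(fun i => e n i ω) ⬝ᵥ (P n ω *ᵥ fun i => e n i ω) -
              (fun i => estar n i ω) ⬝ᵥ (P n ω *ᵥ fun i => estar n i ω)| /
                s2 n}).toReal)
        atTop (nhds 0)) ∧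
    -- (iii)  max_{1 ≤ i ≤ n} |Var[eᵢ|xᵢ]/s² − 1| → 0 in probability
    (∀ δ : ℝ, 0 < δ → Tendsto
        (fun n : ℕ => (ℙ {ω | ∃ i : Fin n, δ < |V n i ω / s2 n - 1|}).toReal)
        atTop (nhds 0)) := by
  classical
  have hspos : ∀ n, 0 < Real.sqrt (s2 n) := fun n => Real.sqrt_pos.mpr (hs2pos n)
  have squeeze : ∀ f g : ℕ → ℝ, (∀ᶠ n in atTop, f n ≤ g n) → (∀ n, 0 ≤ f n) →
      Tendsto g atTop (nhds 0) → Tendsto f atTop (nhds 0) := fun f g hfg hf hg =>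
    tendsto_of_tendsto_of_tendsto_of_le_of_le' tendsto_const_nhds hg
      (Eventually.of_forall hf) hfg
  -- Markov / Chebyshev bound for the errors
  have hMarkov : ∀ n (i : Fin n) (nr : ℝ), 0 < nr →
      (ℙ {ω : Ω n | nr * Real.sqrt (s2 n) < |e n i ω|}).toReal ≤ 1 / nr ^ 2 := by
    intro n i nr hnr
    have hint : Integrable (fun ω => (e n i ω) ^ 2) ℙ := (he2 n i).integrable_sq
    have hsub : {ω : Ω n | nr * Real.sqrt (s2 n) < |e n i ω|} ⊆
        {ω : Ω n | nr ^ 2 * s2 n ≤ (fun ω => (e n i ω) ^ 2) ω} := by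
      intro ω hω
      simp only [Set.mem_setOf_eq] at hω ⊢
      have h0 : 0 ≤ nr * Real.sqrt (s2 n) := by positivity
      have hsq := pow_le_pow_left₀ h0 hω.le 2
      calc nr ^ 2 * s2 n = (nr * Real.sqrt (s2 n)) ^ 2 := by
            rw [mul_pow, Real.sq_sqrt (hs2pos n).le]
        _ ≤ |e n i ω| ^ 2 := hsq
        _ = (e n i ω) ^ 2 := sq_abs _
    have hM := mul_meas_ge_le_integral_of_nonneg
      (μ := (ℙ : Measure (Ω n)))
      (Eventually.of_forall fun ω => sq_nonneg (e n i ω)) hint (nr ^ 2 * s2 n)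
    rw [← hs2 n i] at hM
    have hmono : (ℙ {ω : Ω n | nr * Real.sqrt (s2 n) < |e n i ω|}).toReal ≤
        (ℙ {ω : Ω n | nr ^ 2 * s2 n ≤ (fun ω => (e n i ω) ^ 2) ω}).toReal :=
      ENNReal.toReal_mono (measure_ne_top _ _) (measure_mono hsub)
    have hfin : (ℙ {ω : Ω n | nr ^ 2 * s2 n ≤ (fun ω => (e n i ω) ^ 2) ω}).toReal ≤
        1 / nr ^ 2 := by
      rw [le_div_iff₀ (pow_pos hnr 2)]
      have h1 : (ℙ {ω : Ω n | nr ^ 2 * s2 n ≤ (fun ω => (e n i ω) ^ 2) ω}).toReal *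
          (nr ^ 2 * s2 n) ≤ s2 n := by rw [measureReal_def] at hM; beta_reduce; linarith [hM]
      have hs2n := hs2pos n
      nlinarith [ENNReal.toReal_nonneg
        (a := ℙ {ω : Ω n | nr ^ 2 * s2 n ≤ (fun ω => (e n i ω) ^ 2) ω})]
    exact hmono.trans hfin
  -- the bad-event probability tends to zero
  have hbad : ∀ M' : ℕ, Tendsto (fun n : ℕ => (ℙ {ω : Ω n | ¬ ∀ i : Fin n,
      |m1 n i ω| / Real.sqrt (s2 n) ≤ ((n:ℝ) ^ M')⁻¹ ∧
      |m2 n i ω - s2 n| / s2 n ≤ ((n:ℝ) ^ M')⁻¹ ∧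
      |e n i ω| ≤ (n:ℝ) * Real.sqrt (s2 n)}).toReal) atTop (nhds 0) := by
    intro M'
    apply squeeze _
      (fun n : ℕ => 2 * ((n:ℝ) ^ (M'+1) * c n + (n:ℝ) * r n) + ((n:ℝ))⁻¹)
      ?_ (fun n => ENNReal.toReal_nonneg) ?_
    · filter_upwards [eventually_ge_atTop 1] with n hn
      have hn1 : (1:ℝ) ≤ (n:ℝ) := by exact_mod_cast hn
      have hnpos : (0:ℝ) < (n:ℝ) := by linarith
      set T : ℝ := ((n:ℝ) ^ M')⁻¹ with hT
      have hTpos : 0 < T := inv_pos.mpr (pow_pos hnpos M')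
      set S1 : Fin n → Set (Ω n) :=
        fun i => {ω | T < |m1 n i ω| / Real.sqrt (s2 n)} with hS1
      set S2 : Fin n → Set (Ω n) :=
        fun i => {ω | T < |m2 n i ω - s2 n| / s2 n} with hS2
      set S3 : Fin n → Set (Ω n) :=
        fun i => {ω | (n:ℝ) * Real.sqrt (s2 n) < |e n i ω|} with hS3
      have hsub : {ω : Ω n | ¬ ∀ i : Fin n,
          |m1 n i ω| / Real.sqrt (s2 n) ≤ T ∧
          |m2 n i ω - s2 n| / s2 n ≤ T ∧
          |e n i ω| ≤ (n:ℝ) * Real.sqrt (s2 n)} ⊆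
          ⋃ i : Fin n, (S1 i ∪ (S2 i ∪ S3 i)) := by
        intro ω hω
        simp only [Set.mem_setOf_eq, not_forall] at hω
        obtain ⟨i, hi⟩ := hω
        refine Set.mem_iUnion.mpr ⟨i, ?_⟩
        by_contra hcon
        simp only [hS1, hS2, hS3, Set.mem_union, Set.mem_setOf_eq, not_or,
          not_lt] at hcon
        exact hi ⟨hcon.1, hcon.2.1, hcon.2.2⟩
      have hle : ℙ {ω : Ω n | ¬ ∀ i : Fin n,
          |m1 n i ω| / Real.sqrt (s2 n) ≤ T ∧
          |m2 n i ω - s2 n| / s2 n ≤ T ∧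
          |e n i ω| ≤ (n:ℝ) * Real.sqrt (s2 n)} ≤
          ∑ i : Fin n, (ℙ (S1 i) + (ℙ (S2 i) + ℙ (S3 i))) := by
        refine (measure_mono hsub).trans ?_
        refine (measure_iUnion_fintype_le _ _).trans ?_
        exact Finset.sum_le_sum fun i _ => (measure_union_le _ _).trans
          (add_le_add le_rfl (measure_union_le _ _))
      have hne : ∀ i ∈ Finset.univ, (ℙ (S1 i) + (ℙ (S2 i) + ℙ (S3 i))) ≠ ⊤ :=
        fun i _ => ENNReal.add_ne_top.mpr ⟨measure_ne_top _ _,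
          ENNReal.add_ne_top.mpr ⟨measure_ne_top _ _, measure_ne_top _ _⟩⟩
      have h2 : (ℙ {ω : Ω n | ¬ ∀ i : Fin n,
          |m1 n i ω| / Real.sqrt (s2 n) ≤ T ∧
          |m2 n i ω - s2 n| / s2 n ≤ T ∧
          |e n i ω| ≤ (n:ℝ) * Real.sqrt (s2 n)}).toReal ≤
          ∑ i : Fin n,
            ((ℙ (S1 i)).toReal + ((ℙ (S2 i)).toReal + (ℙ (S3 i)).toReal)) := by
        calc (ℙ {ω : Ω n | ¬ ∀ i : Fin n,
              |m1 n i ω| / Real.sqrt (s2 n) ≤ T ∧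
              |m2 n i ω - s2 n| / s2 n ≤ T ∧
              |e n i ω| ≤ (n:ℝ) * Real.sqrt (s2 n)}).toReal
            ≤ (∑ i : Fin n, (ℙ (S1 i) + (ℙ (S2 i) + ℙ (S3 i)))).toReal :=
              ENNReal.toReal_mono (ENNReal.sum_ne_top.mpr hne) hle
          _ = ∑ i : Fin n,
              ((ℙ (S1 i)).toReal + ((ℙ (S2 i)).toReal + (ℙ (S3 i)).toReal)) := by
              rw [ENNReal.toReal_sum hne]
              refine Finset.sum_congr rfl fun i _ => ?_
              rw [ENNReal.toReal_add (measure_ne_top _ _)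
                  (ENNReal.add_ne_top.mpr ⟨measure_ne_top _ _, measure_ne_top _ _⟩),
                ENNReal.toReal_add (measure_ne_top _ _) (measure_ne_top _ _)]
      have hterm : ∀ i : Fin n,
          (ℙ (S1 i)).toReal + ((ℙ (S2 i)).toReal + (ℙ (S3 i)).toReal) ≤
          (c n * (n:ℝ) ^ M' + r n) + ((c n * (n:ℝ) ^ M' + r n) + 1 / (n:ℝ) ^ 2) := by
        intro i
        have hb1 := htail1 n i T hTpos
        have hb2 := htail2 n i T hTpos
        have hcT : c n / T = c n * (n:ℝ) ^ M' := by
          rw [hT, div_eq_mul_inv, inv_inv]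
        rw [hcT] at hb1 hb2
        have hb3 := hMarkov n i (n:ℝ) hnpos
        exact add_le_add hb1 (add_le_add hb2 hb3)
      refine h2.trans ?_
      calc ∑ i : Fin n,
            ((ℙ (S1 i)).toReal + ((ℙ (S2 i)).toReal + (ℙ (S3 i)).toReal))
          ≤ ∑ _i : Fin n, ((c n * (n:ℝ) ^ M' + r n) +
              ((c n * (n:ℝ) ^ M' + r n) + 1 / (n:ℝ) ^ 2)) :=
            Finset.sum_le_sum fun i _ => hterm i
        _ = (n:ℝ) * ((c n * (n:ℝ) ^ M' + r n) +
              ((c n * (n:ℝ) ^ M' + r n) + 1 / (n:ℝ) ^ 2)) := by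
            rw [Finset.sum_const, Finset.card_univ, Fintype.card_fin,
              nsmul_eq_mul]
        _ = 2 * ((n:ℝ) ^ (M'+1) * c n + (n:ℝ) * r n) + ((n:ℝ))⁻¹ := by
            have hne0 : (n:ℝ) ≠ 0 := hnpos.ne'
            field_simp
            ring
    · have l1 := hcdecay (M'+1)
      have l3 : Tendsto (fun n : ℕ => ((n:ℝ))⁻¹) atTop (nhds 0) :=
        tendsto_inv_atTop_nhds_zero_nat
      have := ((l1.add hrdecay).const_mul 2).add l3
      simpa using this
  refine ⟨?_, ?_, ?_⟩
  · -- part (i)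
    intro k δ hδ
    obtain ⟨M, hM⟩ := exists_nat_ge k
    refine squeeze _ _ ?_ (fun n => ENNReal.toReal_nonneg) (hbad (M+3))
    filter_upwards [eventually_ge_atTop 4,
      (tendsto_natCast_atTop_atTop.const_mul_atTop hδ).eventually_ge_atTop 6]
      with n hn4 hn6
    refine ENNReal.toReal_mono (measure_ne_top _ _) (measure_mono ?_)
    intro ω hω
    rw [Set.mem_setOf_eq] at hω
    rw [Set.mem_setOf_eq]
    intro hgood
    refine absurd hω (not_lt.mpr ?_)
    have hn1 : (1:ℝ) ≤ (n:ℝ) := by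
      have : (1:ℕ) ≤ n := by omega
      exact_mod_cast this
    have hnpos : (0:ℝ) < (n:ℝ) := by linarith
    set T : ℝ := ((n:ℝ) ^ (M+3))⁻¹ with hT
    have hTpos : 0 < T := inv_pos.mpr (pow_pos hnpos (M+3))
    have hT14 : T ≤ 1/4 := by
      have h4 : (4:ℝ) ≤ (n:ℝ) ^ (M+3) := by
        calc (4:ℝ) ≤ (n:ℝ) := by exact_mod_cast hn4
          _ ≤ (n:ℝ) ^ (M+3) := le_self_pow₀ hn1 (by omega)
      calc T ≤ (4:ℝ)⁻¹ := by
            rw [hT]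
            exact inv_anti₀ (by norm_num) h4
        _ = 1/4 := by norm_num
    have hper : ∀ i : Fin n,
        |e n i ω - estar n i ω| ≤ 6 * (n:ℝ) * T * Real.sqrt (s2 n) := by
      intro i
      obtain ⟨ha, hb, hc⟩ := hgood i
      have h1 : |m1 n i ω| ≤ T * Real.sqrt (s2 n) := (div_le_iff₀ (hspos n)).mp ha
      have h2 : |m2 n i ω - s2 n| ≤ T * s2 n := (div_le_iff₀ (hs2pos n)).mp hb
      have haux := auxA (hs2pos n) hTpos hT14 hn1 h1 h2 hc
      rw [hestar n i ω, hV n i ω]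
      exact haux
    have hsum := aux_sqrt_sum_le (fun i => e n i ω - estar n i ω)
      (6 * (n:ℝ) * T * Real.sqrt (s2 n)) (by positivity) hper
    have hsqn : Real.sqrt (n:ℝ) ≤ (n:ℝ) := aux_sqrt_le_self hn1
    have hk : (n:ℝ) ^ k ≤ (n:ℝ) ^ (M:ℕ) := by
      rw [← Real.rpow_natCast (n:ℝ) M]
      exact Real.rpow_le_rpow_of_exponent_le hn1 hM
    have hk0 : (0:ℝ) ≤ (n:ℝ) ^ k := Real.rpow_nonneg hnpos.le k
    calc (n:ℝ) ^ k * Real.sqrt (∑ i : Fin n, (e n i ω - estar n i ω) ^ 2) /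
          Real.sqrt (s2 n)
        ≤ (n:ℝ) ^ k * (Real.sqrt (n:ℝ) * (6 * (n:ℝ) * T * Real.sqrt (s2 n))) /
          Real.sqrt (s2 n) := by gcongr
      _ = (n:ℝ) ^ k * Real.sqrt (n:ℝ) * (6 * (n:ℝ) * T) := by
          have hsne : Real.sqrt (s2 n) ≠ 0 := (hspos n).ne'
          field_simp
      _ ≤ (n:ℝ) ^ (M:ℕ) * (n:ℝ) * (6 * (n:ℝ) * T) := by
          have h6 : (0:ℝ) ≤ 6 * (n:ℝ) * T := by positivity
          have hsq0 : (0:ℝ) ≤ Real.sqrt (n:ℝ) := Real.sqrt_nonneg _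
          exact mul_le_mul_of_nonneg_right
            (mul_le_mul hk hsqn hsq0 (by positivity)) h6
      _ = 6 / (n:ℝ) := by
          rw [hT]
          have hne0 : (n:ℝ) ≠ 0 := hnpos.ne'
          field_simp
          ring
      _ ≤ δ := by
          rw [div_le_iff₀ hnpos]
          linarith
  · -- part (ii)
    intro k P hPmeas hPsym δ hδ
    obtain ⟨M, hM⟩ := exists_nat_ge k
    refine squeeze _ _ ?_ (fun n => ENNReal.toReal_nonneg) (hbad (M+5))
    filter_upwards [eventually_ge_atTop 6,
      (tendsto_natCast_atTop_atTop.const_mul_atTop hδ).eventually_ge_atTop 18]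
      with n hn6 hn18
    refine ENNReal.toReal_mono (measure_ne_top _ _) (measure_mono ?_)
    intro ω hω
    rw [Set.mem_setOf_eq] at hω
    rw [Set.mem_setOf_eq]
    intro hgood
    refine absurd hω (not_lt.mpr ?_)
    have hn1 : (1:ℝ) ≤ (n:ℝ) := by
      have : (1:ℕ) ≤ n := by omega
      exact_mod_cast this
    have hnpos : (0:ℝ) < (n:ℝ) := by linarith
    set T : ℝ := ((n:ℝ) ^ (M+5))⁻¹ with hT
    have hTpos : 0 < T := inv_pos.mpr (pow_pos hnpos (M+5))
    have hn6' : (6:ℝ) ≤ (n:ℝ) := by exact_mod_cast hn6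
    have hT16 : T ≤ 1/6 := by
      have h6 : (6:ℝ) ≤ (n:ℝ) ^ (M+5) := by
        calc (6:ℝ) ≤ (n:ℝ) := hn6'
          _ ≤ (n:ℝ) ^ (M+5) := le_self_pow₀ hn1 (by omega)
      calc T ≤ (6:ℝ)⁻¹ := by
            rw [hT]
            exact inv_anti₀ (by norm_num) h6
        _ = 1/6 := by norm_num
    have hT14 : T ≤ 1/4 := by linarith
    have hper : ∀ i : Fin n,
        |e n i ω - estar n i ω| ≤ 6 * (n:ℝ) * T * Real.sqrt (s2 n) := by
      intro i
      obtain ⟨ha, hb, hc⟩ := hgood i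
      have h1 : |m1 n i ω| ≤ T * Real.sqrt (s2 n) := (div_le_iff₀ (hspos n)).mp ha
      have h2 : |m2 n i ω - s2 n| ≤ T * s2 n := (div_le_iff₀ (hs2pos n)).mp hb
      have haux := auxA (hs2pos n) hTpos hT14 hn1 h1 h2 hc
      rw [hestar n i ω, hV n i ω]
      exact haux
    have hee : ∀ i : Fin n, |e n i ω| ≤ (n:ℝ) * Real.sqrt (s2 n) :=
      fun i => (hgood i).2.2
    have hes : ∀ i : Fin n, |estar n i ω| ≤ 2 * (n:ℝ) * Real.sqrt (s2 n) := by
      intro i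
      have h1 := hper i
      have h2 := hee i
      have h3 : 6 * (n:ℝ) * T * Real.sqrt (s2 n) ≤ (n:ℝ) * Real.sqrt (s2 n) := by
        nlinarith [mul_nonneg (mul_nonneg
          (by linarith : (0:ℝ) ≤ 1 - 6 * T) hnpos.le) (hspos n).le]
      calc |estar n i ω| = |e n i ω - (e n i ω - estar n i ω)| := by ring_nf
        _ ≤ |e n i ω| + |e n i ω - estar n i ω| := abs_sub _ _
        _ ≤ 2 * (n:ℝ) * Real.sqrt (s2 n) := by linarith
    obtain ⟨hsymP, hidP⟩ := hPsym n ω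
    have hq := aux_quad (P n ω) hsymP hidP (fun i => e n i ω) (fun i => estar n i ω)
    have hS1 := aux_sqrt_sum_le (fun i => e n i ω - estar n i ω)
      (6 * (n:ℝ) * T * Real.sqrt (s2 n)) (by positivity) hper
    have hS2 := aux_sqrt_sum_le (fun i => e n i ω) ((n:ℝ) * Real.sqrt (s2 n))
      (by positivity) hee
    have hS3 := aux_sqrt_sum_le (fun i => estar n i ω)
      (2 * (n:ℝ) * Real.sqrt (s2 n)) (by positivity) hes
    have hdiff : |(fun i => e n i ω) ⬝ᵥ (P n ω *ᵥ fun i => e n i ω) -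
        (fun i => estar n i ω) ⬝ᵥ (P n ω *ᵥ fun i => estar n i ω)| ≤
        (Real.sqrt (n:ℝ) * (6 * (n:ℝ) * T * Real.sqrt (s2 n))) *
          ((Real.sqrt (n:ℝ) * ((n:ℝ) * Real.sqrt (s2 n))) +
           (Real.sqrt (n:ℝ) * (2 * (n:ℝ) * Real.sqrt (s2 n)))) := by
      refine hq.trans ?_
      have hC0 : (0:ℝ) ≤ Real.sqrt (n:ℝ) * (6 * (n:ℝ) * T * Real.sqrt (s2 n)) :=
        mul_nonneg (Real.sqrt_nonneg _) (by positivity)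
      exact mul_le_mul hS1 (add_le_add hS2 hS3)
        (by positivity) hC0
    have hred : (Real.sqrt (n:ℝ) * (6 * (n:ℝ) * T * Real.sqrt (s2 n))) *
          ((Real.sqrt (n:ℝ) * ((n:ℝ) * Real.sqrt (s2 n))) +
           (Real.sqrt (n:ℝ) * (2 * (n:ℝ) * Real.sqrt (s2 n)))) =
        18 * ((n:ℝ) ^ 3 * T * s2 n) := by
      have hb1 : Real.sqrt (n:ℝ) * Real.sqrt (n:ℝ) = (n:ℝ) :=
        Real.mul_self_sqrt hnpos.le
      have hb2 : Real.sqrt (s2 n) * Real.sqrt (s2 n) = s2 n :=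
        Real.mul_self_sqrt (hs2pos n).le
      calc (Real.sqrt (n:ℝ) * (6 * (n:ℝ) * T * Real.sqrt (s2 n))) *
            ((Real.sqrt (n:ℝ) * ((n:ℝ) * Real.sqrt (s2 n))) +
             (Real.sqrt (n:ℝ) * (2 * (n:ℝ) * Real.sqrt (s2 n)))) =
          (Real.sqrt (n:ℝ) * Real.sqrt (n:ℝ)) *
            (Real.sqrt (s2 n) * Real.sqrt (s2 n)) * (18 * ((n:ℝ) * (n:ℝ) * T)) := by
            ring
        _ = 18 * ((n:ℝ) ^ 3 * T * s2 n) := by rw [hb1, hb2]; ring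
    rw [hred] at hdiff
    have hk : (n:ℝ) ^ k ≤ (n:ℝ) ^ (M:ℕ) := by
      rw [← Real.rpow_natCast (n:ℝ) M]
      exact Real.rpow_le_rpow_of_exponent_le hn1 hM
    have hk0 : (0:ℝ) ≤ (n:ℝ) ^ k := Real.rpow_nonneg hnpos.le k
    calc (n:ℝ) ^ k * |(fun i => e n i ω) ⬝ᵥ (P n ω *ᵥ fun i => e n i ω) -
          (fun i => estar n i ω) ⬝ᵥ (P n ω *ᵥ fun i => estar n i ω)| / s2 n
        ≤ (n:ℝ) ^ k * (18 * ((n:ℝ) ^ 3 * T * s2 n)) / s2 n := by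
          have h := mul_le_mul_of_nonneg_left hdiff hk0
          exact (div_le_div_iff_of_pos_right (hs2pos n)).mpr h
      _ = 18 * ((n:ℝ) ^ k * (n:ℝ) ^ 3 * T) := by
          have hs2ne : s2 n ≠ 0 := (hs2pos n).ne'
          field_simp
      _ ≤ 18 * ((n:ℝ) ^ (M:ℕ) * (n:ℝ) ^ 3 * T) := by
          have hT0 : (0:ℝ) ≤ T := hTpos.le
          have h3 : (0:ℝ) ≤ (n:ℝ) ^ 3 := by positivity
          gcongr
      _ = 18 / (n:ℝ) ^ 2 := by
          rw [hT]
          have hne0 : (n:ℝ) ≠ 0 := hnpos.ne'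
          field_simp
          ring
      _ ≤ δ := by
          rw [div_le_iff₀ (by positivity : (0:ℝ) < (n:ℝ) ^ 2)]
          nlinarith
  · -- part (iii)
    intro δ hδ
    set t1 : ℝ := min 1 (δ/2) with ht1def
    have ht1pos : 0 < t1 := lt_min one_pos (by linarith)
    have ht2pos : 0 < δ/2 := by linarith
    refine squeeze _
      (fun n : ℕ => (n:ℝ) * ((c n / t1 + r n) + (c n / (δ/2) + r n)))
      ?_ (fun n => ENNReal.toReal_nonneg) ?_
    · filter_upwards with n
      set U1 : Fin n → Set (Ω n) :=
        fun i => {ω | t1 < |m1 n i ω| / Real.sqrt (s2 n)} with hU1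
      set U2 : Fin n → Set (Ω n) :=
        fun i => {ω | δ/2 < |m2 n i ω - s2 n| / s2 n} with hU2
      have hsub : {ω : Ω n | ∃ i : Fin n, δ < |V n i ω / s2 n - 1|} ⊆
          ⋃ i : Fin n, (U1 i ∪ U2 i) := by
        intro ω hω
        obtain ⟨i, hi⟩ := hω
        refine Set.mem_iUnion.mpr ⟨i, ?_⟩
        by_contra hcon
        simp only [hU1, hU2, Set.mem_union, Set.mem_setOf_eq, not_or,
          not_lt] at hcon
        have haux := auxC (hs2pos n) (min_le_left 1 (δ/2)) hcon.1 hcon.2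
        rw [hV n i ω] at hi
        have ht1le : t1 ≤ δ/2 := min_le_right _ _
        have : |(m2 n i ω - (m1 n i ω) ^ 2) / s2 n - 1| ≤ δ := by linarith
        exact absurd hi (not_lt.mpr this)
      have hle : ℙ {ω : Ω n | ∃ i : Fin n, δ < |V n i ω / s2 n - 1|} ≤
          ∑ i : Fin n, (ℙ (U1 i) + ℙ (U2 i)) := by
        refine (measure_mono hsub).trans ?_
        refine (measure_iUnion_fintype_le _ _).trans ?_
        exact Finset.sum_le_sum fun i _ => measure_union_le _ _
      have hne : ∀ i ∈ Finset.univ, (ℙ (U1 i) + ℙ (U2 i)) ≠ ⊤ :=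
        fun i _ => ENNReal.add_ne_top.mpr ⟨measure_ne_top _ _, measure_ne_top _ _⟩
      calc (ℙ {ω : Ω n | ∃ i : Fin n, δ < |V n i ω / s2 n - 1|}).toReal
          ≤ (∑ i : Fin n, (ℙ (U1 i) + ℙ (U2 i))).toReal :=
            ENNReal.toReal_mono (ENNReal.sum_ne_top.mpr hne) hle
        _ = ∑ i : Fin n, ((ℙ (U1 i)).toReal + (ℙ (U2 i)).toReal) := by
            rw [ENNReal.toReal_sum hne]
            exact Finset.sum_congr rfl fun i _ =>
              ENNReal.toReal_add (measure_ne_top _ _) (measure_ne_top _ _)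
        _ ≤ ∑ _i : Fin n, ((c n / t1 + r n) + (c n / (δ/2) + r n)) :=
            Finset.sum_le_sum fun i _ =>
              add_le_add (htail1 n i t1 ht1pos) (htail2 n i (δ/2) ht2pos)
        _ = (n:ℝ) * ((c n / t1 + r n) + (c n / (δ/2) + r n)) := by
            rw [Finset.sum_const, Finset.card_univ, Fintype.card_fin,
              nsmul_eq_mul]
    · have hnc : Tendsto (fun n : ℕ => (n:ℝ) * c n) atTop (nhds 0) := by
        have := hcdecay 1
        simpa using this
      have hlim := ((hnc.div_const t1).add hrdecay).add
        ((hnc.div_const (δ/2)).add hrdecay)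
      have heq : (fun n : ℕ => (n:ℝ) * ((c n / t1 + r n) + (c n / (δ/2) + r n))) =
          (fun n : ℕ => ((n:ℝ) * c n / t1 + (n:ℝ) * r n) +
            ((n:ℝ) * c n / (δ/2) + (n:ℝ) * r n)) := by
        funext n
        ring
      rw [heq]
      simpa using hlim
end

section
/- Let X be an n×p real matrix and U = [ι, X] the n×(p+1) matrix obtained by prepending the column ι = (1,…,1)'. If U'U is invertible, then X'(I_n − P_ι)X is invertible and the last p rows of the (p+1)×n matrix (U'U)⁻¹U' equal (X'(I_n − P_ι)X)⁻¹X'(I_n − P_ι); consequently, if Y = ια + Xβ + E for α ∈ ℝ, β ∈ ℝ^p, E ∈ ℝⁿ, then the OLS slope coefficient satisfies β̂ = β + (V'V)⁻¹V'E with V = (I_n − P_ι)X. -/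
open Matrix

/-- The matrix `[ι, X]` obtained from `X` by prepending the all-ones column `ι`. -/
def withIota {n p : ℕ} (X : Matrix (Fin n) (Fin p) ℝ) :
    Matrix (Fin n) (Fin (p + 1)) ℝ :=
  Matrix.of fun i j => Fin.cons (α := fun _ => ℝ) 1 (X i) j

/-- The OLS slope vector `β̂`: the last `p` entries of `([ι,X]'[ι,X])⁻¹[ι,X]'Y`. -/
noncomputable def olsSlope {n p : ℕ} (X : Matrix (Fin n) (Fin p) ℝ) (Y : Fin n → ℝ) :
    Fin p → ℝ :=
  fun j => ((((withIota X)ᵀ * withIota X)⁻¹ * (withIota X)ᵀ) *ᵥ Y) j.succ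

/-- The orthogonal projection matrix `P_ι = ιι'/n` onto the span of `ι = (1,…,1)'`. -/
noncomputable def iotaProj (n : ℕ) : Matrix (Fin n) (Fin n) ℝ :=
  Matrix.of fun _ _ => (n : ℝ)⁻¹

namespace Stmt16Aux

/-- selection matrix picking the last `p` rows -/
def Rsel (p : ℕ) : Matrix (Fin p) (Fin (p + 1)) ℝ :=
  Matrix.of fun j k => if k = j.succ then 1 else 0

def e0 (p : ℕ) : Matrix (Fin (p + 1)) (Fin 1) ℝ :=
  Matrix.of fun j _ => if j = 0 then 1 else 0

def iotaM (n : ℕ) : Matrix (Fin n) (Fin 1) ℝ :=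
  Matrix.of fun _ _ => 1

variable {n p : ℕ}

lemma row_eq (B : Matrix (Fin (p + 1)) (Fin n) ℝ) (j : Fin p) (i : Fin n) :
    (Rsel p * B) j i = B j.succ i := by
  simp [Rsel, Matrix.mul_apply]

lemma row_mulVec (B : Matrix (Fin (p + 1)) (Fin n) ℝ) (v : Fin n → ℝ) (j : Fin p) :
    ((Rsel p * B) *ᵥ v) j = (B *ᵥ v) j.succ := by
  simp [Matrix.mulVec, dotProduct, row_eq]

lemma U_mul_RselT (X : Matrix (Fin n) (Fin p) ℝ) :
    withIota X * (Rsel p)ᵀ = X := by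
  ext i j
  simp [Rsel, withIota, Matrix.mul_apply]

lemma Rsel_mul_RselT : Rsel p * (Rsel p)ᵀ = 1 := by
  ext j k
  simp [Rsel, Matrix.mul_apply, Matrix.one_apply, Fin.succ_inj, eq_comm]

lemma Rsel_mul_e0 : Rsel p * e0 p = 0 := by
  ext j k
  simp [Rsel, e0, Matrix.mul_apply, Fin.succ_ne_zero, eq_comm]

lemma U_mul_e0 (X : Matrix (Fin n) (Fin p) ℝ) :
    withIota X * e0 p = iotaM n := by
  ext i k
  simp [e0, withIota, iotaM, Matrix.mul_apply]

lemma iotaProj_eq : iotaProj n = (n : ℝ)⁻¹ • (iotaM n * (iotaM n)ᵀ) := by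
  ext i j
  simp [iotaProj, iotaM, Matrix.mul_apply]

lemma Udec (X : Matrix (Fin n) (Fin p) ℝ) :
    withIota X = iotaM n * (e0 p)ᵀ + X * Rsel p := by
  ext i j
  refine Fin.cases ?_ ?_ j <;>
    simp [withIota, iotaM, e0, Rsel, Matrix.mul_apply, Fin.succ_ne_zero, eq_comm,
      Fin.succ_inj]

lemma proj_transpose : (1 - iotaProj n)ᵀ = 1 - iotaProj n := by
  ext i j
  simp [iotaProj, Matrix.one_apply, eq_comm]

lemma proj_idem (hn : (n : ℝ) ≠ 0) : iotaProj n * iotaProj n = iotaProj n := by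
  ext i j
  simp [iotaProj, Matrix.mul_apply, Finset.sum_const]
  field_simp

lemma M_idem (hn : (n : ℝ) ≠ 0) :
    (1 - iotaProj n) * (1 - iotaProj n) = (1 - iotaProj n) := by
  simp [Matrix.mul_sub, Matrix.sub_mul, proj_idem hn]

lemma M_mul_iotaM (hn : (n : ℝ) ≠ 0) : (1 - iotaProj n) * iotaM n = 0 := by
  ext i k
  simp [Matrix.sub_mul, iotaProj, iotaM, Matrix.mul_apply, Matrix.one_apply,
    Finset.sum_const, Finset.sum_ite_eq]
  field_simp
  norm_num

lemma M_mulVec_const (hn : (n : ℝ) ≠ 0) (α : ℝ) :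
    (1 - iotaProj n) *ᵥ (fun _ => α) = 0 := by
  ext i
  simp [Matrix.sub_mulVec, iotaProj, Matrix.mulVec, dotProduct,
    Matrix.one_apply, Finset.sum_sub_distrib, Finset.sum_ite_eq, Finset.sum_const,
    nsmul_eq_mul]
  field_simp
  simp only [mul_div_assoc]
  rw [← Finset.sum_mul, Finset.sum_sub_distrib]
  simp [Finset.sum_ite_eq, Finset.sum_const]

end Stmt16Aux

open Stmt16Aux

/-- Let `U = [ι, X]`.  If `U'U` is invertible, then
`X'(I_n − P_ι)X` is invertible and the last `p` rows of `(U'U)⁻¹U'` equal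
`(X'(I_n − P_ι)X)⁻¹X'(I_n − P_ι)`; consequently, if `Y = ια + Xβ + E`, then the OLS
slope coefficient satisfies `β̂ = β + (V'V)⁻¹V'E` with `V = (I_n − P_ι)X`. -/
theorem stmt_16 {n p : ℕ} (X : Matrix (Fin n) (Fin p) ℝ)
    (hU : IsUnit ((withIota X)ᵀ * withIota X).det)
    (V : Matrix (Fin n) (Fin p) ℝ) (hV : V = (1 - iotaProj n) * X) :
    IsUnit (Xᵀ * (1 - iotaProj n) * X).det ∧
    (∀ (j : Fin p) (i : Fin n),
      (((withIota X)ᵀ * withIota X)⁻¹ * (withIota X)ᵀ) j.succ i =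
        (((Xᵀ * (1 - iotaProj n) * X)⁻¹ * (Xᵀ * (1 - iotaProj n)) : Matrix (Fin p) (Fin n) ℝ)) j i) ∧
    (∀ (α : ℝ) (β : Fin p → ℝ) (E : Fin n → ℝ) (Y : Fin n → ℝ),
      Y = (fun _ => α) + X *ᵥ β + E →
      olsSlope X Y = β + ((Vᵀ * V)⁻¹ * Vᵀ) *ᵥ E) := by
  classical
  rcases Nat.eq_zero_or_pos n with hn0 | hn0
  · exfalso
    subst hn0
    have h0 : (withIota X)ᵀ * withIota X = 0 := by
      ext i j; simp [Matrix.mul_apply]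
    rw [h0, Matrix.det_zero] at hU
    exact hU.ne_zero rfl
  have hn : (n : ℝ) ≠ 0 := Nat.cast_ne_zero.mpr hn0.ne'
  set U : Matrix (Fin n) (Fin (p + 1)) ℝ := withIota X with hUdef
  set M : Matrix (Fin n) (Fin n) ℝ := 1 - iotaProj n with hMdef
  set A : Matrix (Fin (p + 1)) (Fin (p + 1)) ℝ := Uᵀ * U with hAdef
  set S : Matrix (Fin p) (Fin p) ℝ := Xᵀ * M * X with hSdef
  have hAA : A * A⁻¹ = 1 := Matrix.mul_nonsing_inv _ hU
  have hA'A : A⁻¹ * A = 1 := Matrix.nonsing_inv_mul _ hU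
  have hX : U * (Rsel p)ᵀ = X := U_mul_RselT X
  have hXT : Rsel p * Uᵀ = Xᵀ := by
    rw [← hX]; simp [Matrix.transpose_mul]
  have hι : U * e0 p = iotaM n := U_mul_e0 X
  have hMM : M * M = M := by rw [hMdef]; exact M_idem hn
  have hMT : Mᵀ = M := by rw [hMdef]; exact proj_transpose
  have hcanc : ∀ {m : ℕ} (Z : Matrix (Fin (p + 1)) (Fin m) ℝ),
      Uᵀ * (U * (A⁻¹ * Z)) = Z := by
    intro m Z
    rw [← Matrix.mul_assoc Uᵀ U, ← hAdef, ← Matrix.mul_assoc, hAA, Matrix.one_mul]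
  have hAL : ∀ {m : ℕ} (Z : Matrix (Fin (p + 1)) (Fin m) ℝ),
      A⁻¹ * (Uᵀ * (U * Z)) = Z := by
    intro m Z
    rw [← Matrix.mul_assoc Uᵀ U Z, ← hAdef, ← Matrix.mul_assoc, hA'A, Matrix.one_mul]
  -- (i)  Xᵀ M U = S R
  have hXMU : Xᵀ * M * U = S * Rsel p := by
    rw [hUdef, Udec X, Matrix.mul_add]
    have h1 : Xᵀ * M * (iotaM n * (e0 p)ᵀ) = 0 := by
      rw [← Matrix.mul_assoc, Matrix.mul_assoc Xᵀ M (iotaM n), hMdef,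
        M_mul_iotaM hn, Matrix.mul_zero, Matrix.zero_mul]
    rw [h1, zero_add, ← Matrix.mul_assoc, ← hSdef]
  -- (ii) P U A⁻¹ Uᵀ = P
  have hPU : iotaProj n * (U * (A⁻¹ * Uᵀ)) = iotaProj n := by
    rw [iotaProj_eq, ← hι, Matrix.smul_mul]
    congr 1
    rw [Matrix.transpose_mul, Matrix.mul_assoc (U * e0 p),
      Matrix.mul_assoc ((e0 p)ᵀ) Uᵀ, hcanc]
  -- (iii) key identity
  have hXW : Xᵀ * (U * (A⁻¹ * Uᵀ)) = Xᵀ := by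
    rw [← hXT, Matrix.mul_assoc, hcanc]
  have hKey : S * (Rsel p * (A⁻¹ * Uᵀ)) = Xᵀ * M := by
    calc S * (Rsel p * (A⁻¹ * Uᵀ))
        = (S * Rsel p) * (A⁻¹ * Uᵀ) := (Matrix.mul_assoc _ _ _).symm
      _ = (Xᵀ * M * U) * (A⁻¹ * Uᵀ) := by rw [hXMU]
      _ = (Xᵀ * M) * (U * (A⁻¹ * Uᵀ)) := Matrix.mul_assoc _ _ _
      _ = (Xᵀ - Xᵀ * iotaProj n) * (U * (A⁻¹ * Uᵀ)) := by
            rw [hMdef, Matrix.mul_sub, Matrix.mul_one]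
      _ = Xᵀ * (U * (A⁻¹ * Uᵀ)) - Xᵀ * (iotaProj n * (U * (A⁻¹ * Uᵀ))) := by
            rw [Matrix.sub_mul, Matrix.mul_assoc]
      _ = Xᵀ - Xᵀ * iotaProj n := by rw [hXW, hPU]
      _ = Xᵀ * M := by rw [hMdef, Matrix.mul_sub, Matrix.mul_one]
  -- symmetry of S
  have hST : Sᵀ = S := by
    rw [hSdef]
    simp [Matrix.transpose_mul, hMT, Matrix.mul_assoc]
  have hUMX : Uᵀ * (M * X) = (Rsel p)ᵀ * S := by
    have h := congrArg Matrix.transpose hXMU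
    simpa [Matrix.transpose_mul, hMT, hST, Matrix.mul_assoc] using h
  -- (iv) invertibility
  have hC1 : Rsel p * (A⁻¹ * (Uᵀ * (M * X))) = 1 := by
    set w : Matrix (Fin 1) (Fin p) ℝ := (iotaM n)ᵀ * X with hw
    have h4 : iotaM n * w = U * (e0 p * w) := by
      rw [← hι, Matrix.mul_assoc]
    have hPX : iotaProj n * X = (n : ℝ)⁻¹ • (U * (e0 p * w)) := by
      rw [iotaProj_eq, Matrix.smul_mul, Matrix.mul_assoc, ← hw, h4]
    have h5 : Uᵀ * (M * X) =
        Uᵀ * (U * (Rsel p)ᵀ) - (n : ℝ)⁻¹ • (Uᵀ * (U * (e0 p * w))) := by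
      rw [hMdef, Matrix.sub_mul, Matrix.one_mul, Matrix.mul_sub, hPX,
        Matrix.mul_smul, hX]
    have h6 : A⁻¹ * (Uᵀ * (M * X)) = (Rsel p)ᵀ - (n : ℝ)⁻¹ • (e0 p * w) := by
      rw [h5, Matrix.mul_sub, Matrix.mul_smul, hAL, hAL]
    rw [h6, Matrix.mul_sub, Matrix.mul_smul, Rsel_mul_RselT, ← Matrix.mul_assoc,
      Rsel_mul_e0, Matrix.zero_mul, smul_zero, sub_zero]
  have hTS : (Rsel p * (A⁻¹ * (Rsel p)ᵀ)) * S = 1 := by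
    rw [Matrix.mul_assoc, Matrix.mul_assoc, ← hUMX, hC1]
  have hS : IsUnit S.det := Matrix.isUnit_det_of_left_inverse hTS
  have hRowEq : Rsel p * (A⁻¹ * Uᵀ) = S⁻¹ * (Xᵀ * M) := by
    calc Rsel p * (A⁻¹ * Uᵀ)
        = (S⁻¹ * S) * (Rsel p * (A⁻¹ * Uᵀ)) := by
          rw [Matrix.nonsing_inv_mul S hS, Matrix.one_mul]
      _ = S⁻¹ * (S * (Rsel p * (A⁻¹ * Uᵀ))) := by rw [Matrix.mul_assoc]
      _ = S⁻¹ * (Xᵀ * M) := by rw [hKey]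
  refine ⟨hS, ?_, ?_⟩
  · intro j i
    rw [← hRowEq, row_eq]
  · intro α β E Y hY
    have holS : olsSlope X Y = (S⁻¹ * (Xᵀ * M)) *ᵥ Y := by
      funext j
      have h := row_mulVec (A⁻¹ * Uᵀ) Y j
      rw [hRowEq] at h
      show ((A⁻¹ * Uᵀ) *ᵥ Y) j.succ = ((S⁻¹ * (Xᵀ * M)) *ᵥ Y) j
      exact h.symm
    have hWconst : (S⁻¹ * (Xᵀ * M)) *ᵥ (fun _ => α) = 0 := by
      rw [← Matrix.mulVec_mulVec, ← Matrix.mulVec_mulVec, hMdef,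
        M_mulVec_const hn, Matrix.mulVec_zero, Matrix.mulVec_zero]
    have hWX : (S⁻¹ * (Xᵀ * M)) *ᵥ (X *ᵥ β) = β := by
      rw [Matrix.mulVec_mulVec, Matrix.mul_assoc, ← hSdef,
        Matrix.nonsing_inv_mul S hS, Matrix.one_mulVec]
    have hVT : Vᵀ = Xᵀ * M := by
      rw [hV, Matrix.transpose_mul, hMT]
    have hVV : Vᵀ * V = S := by
      rw [hVT, hV, ← Matrix.mul_assoc, Matrix.mul_assoc Xᵀ M M, hMM, ← hSdef]
    rw [holS, hY, Matrix.mulVec_add, Matrix.mulVec_add, hWconst, hWX, zero_add,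
      hVV, hVT]
end
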